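/- arXiv:1711.01146 — 3 statements merged into one kernel-verified Lean document; each statement's English description precedes it below -/
import Mathlib

section
/- In the Coxeter complex of a finite Coxeter group W, a coset W_J x is contained in the fixed hyperplane H_t of a reflection t (meaning W_J x t = W_J x) if and only if the support of t^{x^{-1}} = x t x^{-1} is contained in J. -/
open CoxeterSystem

variable {B W : Type*} [Group W] {M : CoxeterMatrix B}

/-- The support of `w`: the set of indices of simple reflections appearing in some reduced
expression of `w`. -/
def CoxeterSystem.support (cs : CoxeterSystem M W) (w : W) : Set B :=
  {i | ∃ ω : List B, cs.IsReduced ω ∧ cs.wordProd ω = w ∧ i ∈ ω}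

/-- The face `W_J x` of the Coxeter complex: the right coset of the standard parabolic
subgroup `W_J`, viewed as a subset of `W`. -/
def CoxeterSystem.coset (cs : CoxeterSystem M W) (J : Set B) (x : W) : Set W :=
  (fun w => w * x) '' (Subgroup.closure (cs.simple '' J) : Set W)


namespace CoxProof

open CoxeterSystem List
open scoped Classical

section InjectivityRep

variable {B : Type*} (M : CoxeterMatrix B)

/-- Entries of the standard bilinear form. -/
noncomputable def cc (a b : B) : ℂ := -Real.cos (Real.pi / M a b)

lemma cc_diag (a : B) : cc M a a = 1 := by
  rw [cc, M.diagonal a]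
  norm_num [Real.cos_pi]

lemma cc_symm (a b : B) : cc M a b = cc M b a := by
  rw [cc, cc, M.symmetric]

/-- The linear functional `v ↦ ⟨e_a, v⟩`. -/
noncomputable def ff (a : B) : (B →₀ ℂ) →ₗ[ℂ] ℂ :=
  Finsupp.linearCombination ℂ (fun b => cc M a b)

lemma ff_single (a b : B) : ff M a (Finsupp.single b 1) = cc M a b := by
  simp [ff]

/-- The geometric reflection associated to a generator. -/
noncomputable def sigmaRep (a : B) : Module.End ℂ (B →₀ ℂ) :=
  LinearMap.id - (2 : ℂ) • (ff M a).smulRight (Finsupp.single a 1)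

lemma sigmaRep_apply (a : B) (v : B →₀ ℂ) :
    sigmaRep M a v = v - (2 * ff M a v) • Finsupp.single a 1 := by
  simp [sigmaRep, LinearMap.smulRight_apply, smul_smul]

lemma ff_sigmaRep (d e : B) (w : B →₀ ℂ) :
    ff M d (sigmaRep M e w) = ff M d w - 2 * ff M e w * cc M d e := by
  rw [sigmaRep_apply, map_sub, map_smul, ff_single, smul_eq_mul]

lemma sigmaRep_invol (a : B) : sigmaRep M a * sigmaRep M a = 1 := by
  apply LinearMap.ext
  intro v
  rw [Module.End.mul_apply, Module.End.one_apply, sigmaRep_apply, sigmaRep_apply]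
  have h2 : ff M a (v - (2 * ff M a v) • Finsupp.single a 1) = - ff M a v := by
    rw [map_sub, map_smul, ff_single, cc_diag, smul_eq_mul]
    ring
  rw [h2]
  module

lemma step_z (c e x y : ℂ) (he : e^2 + 2*c*e + 1 = 0) :
    (-x + 2*c*y) + e * (-y - 2*c*x + 4*c^2*y) = e^2 * (x + e*y) := by
  linear_combination (-x - (e - 2*c)*y) * he

lemma sigma_pair_pow (a b : B) (hm : 2 ≤ M a b) :
    (sigmaRep M a * sigmaRep M b) ^ (M a b) = 1 := by
  have hm0 : (M a b : ℝ) ≠ 0 := by positivity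
  set θ : ℝ := Real.pi / M a b with hθ
  have hθpos : 0 < θ := div_pos Real.pi_pos (by exact_mod_cast by omega : (0:ℝ) < M a b)
  have hθlt : θ < Real.pi := by
    rw [hθ]
    rw [div_lt_iff₀ (by exact_mod_cast by omega : (0:ℝ) < M a b)]
    have h2 : (2:ℝ) ≤ M a b := by exact_mod_cast hm
    nlinarith [Real.pi_pos]
  have hsin : Real.sin θ ≠ 0 := ne_of_gt (Real.sin_pos_of_pos_of_lt_pi hθpos hθlt)
  have hc : cc M a b = -(Real.cos θ : ℂ) := by rw [cc, hθ]
  have hID : (Real.sin θ : ℂ)^2 + (Real.cos θ : ℂ)^2 = 1 := by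
    exact_mod_cast congrArg (Complex.ofReal) (Real.sin_sq_add_cos_sq θ)
  set E := Complex.exp (θ * Complex.I) with hEdef'
  set F := Complex.exp (-θ * Complex.I) with hFdef'
  have hEdef : E = (Real.cos θ : ℂ) + (Real.sin θ : ℂ) * Complex.I := by
    rw [hEdef', Complex.exp_mul_I, Complex.ofReal_cos, Complex.ofReal_sin]
  have hFdef : F = (Real.cos θ : ℂ) - (Real.sin θ : ℂ) * Complex.I := by
    rw [hFdef', show -(θ:ℂ) * Complex.I = ((-θ : ℝ) : ℂ) * Complex.I by push_cast; ring,
      Complex.exp_mul_I, Complex.ofReal_neg, Complex.cos_neg, Complex.sin_neg,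
      ← Complex.ofReal_cos, ← Complex.ofReal_sin]
    ring
  have hE : E^2 + 2 * (cc M a b) * E + 1 = 0 := by
    rw [hc, hEdef]
    linear_combination ((Real.sin θ : ℂ))^2 * Complex.I_sq - hID
  have hF : F^2 + 2 * (cc M a b) * F + 1 = 0 := by
    rw [hc, hFdef]
    linear_combination ((Real.sin θ : ℂ))^2 * Complex.I_sq - hID
  have hEm : E ^ (2 * M a b) = 1 := by
    rw [hEdef', ← Complex.exp_nat_mul]
    have hmC : (M a b : ℂ) ≠ 0 := Nat.cast_ne_zero.mpr (by omega)
    rw [show ((2 * M a b : ℕ) : ℂ) * ((θ : ℂ) * Complex.I) = 2 * Real.pi * Complex.I by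
      rw [hθ]; push_cast; field_simp]
    exact Complex.exp_two_pi_mul_I
  have hEF : E * F = 1 := by
    rw [hEdef', hFdef', ← Complex.exp_add]
    rw [show (θ : ℂ) * Complex.I + (-θ : ℂ) * Complex.I = 0 by ring]
    exact Complex.exp_zero
  have hFm : F ^ (2 * M a b) = 1 := by
    have hF' : F = E⁻¹ := eq_inv_of_mul_eq_one_left (by rw [mul_comm]; exact hEF)
    rw [hF', inv_pow, hEm, inv_one]
  have hEneF : E ≠ F := by
    intro h
    rw [hEdef, hFdef] at h
    have h2 : (2 : ℂ) * (Real.sin θ : ℂ) * Complex.I = 0 := by linear_combination h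
    rcases mul_eq_zero.mp h2 with h3 | h3
    · rcases mul_eq_zero.mp h3 with h4 | h4
      · norm_num at h4
      · exact hsin (by exact_mod_cast h4)
    · exact Complex.I_ne_zero h3
  apply LinearMap.ext
  intro v
  set P := sigmaRep M a * sigmaRep M b with hP
  show (P ^ M a b) v = (1 : Module.End ℂ (B →₀ ℂ)) v
  have hx' : ∀ u : B →₀ ℂ, ff M a (P u) = -(ff M a u) + 2 * cc M a b * ff M b u := by
    intro u
    rw [hP, Module.End.mul_apply, ff_sigmaRep, ff_sigmaRep, cc_diag]
    ring
  have hy' : ∀ u : B →₀ ℂ, ff M b (P u)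
      = -(ff M b u) - 2 * cc M a b * ff M a u + 4 * (cc M a b)^2 * ff M b u := by
    intro u
    rw [hP, Module.End.mul_apply, ff_sigmaRep, ff_sigmaRep, ff_sigmaRep, cc_diag,
      cc_symm M b a]
    ring
  have key2 : ∀ (e : ℂ), e^2 + 2*(cc M a b)*e + 1 = 0 → ∀ k : ℕ,
      ff M a ((P^k) v) + e * ff M b ((P^k) v)
        = e^(2*k) * (ff M a v + e * ff M b v) := by
    intro e he k
    induction k with
    | zero => simp
    | succ k ih =>
      rw [pow_succ', Module.End.mul_apply, hx' ((P^k) v), hy' ((P^k) v)]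
      calc -(ff M a ((P^k) v)) + 2 * cc M a b * ff M b ((P^k) v)
            + e * (-(ff M b ((P^k) v)) - 2 * cc M a b * ff M a ((P^k) v)
              + 4 * (cc M a b)^2 * ff M b ((P^k) v))
          = e^2 * (ff M a ((P^k) v) + e * ff M b ((P^k) v)) := by
            have := step_z (cc M a b) e (ff M a ((P^k) v)) (ff M b ((P^k) v)) he
            linear_combination this
        _ = e^(2*(k+1)) * (ff M a v + e * ff M b v) := by
            rw [ih, show 2*(k+1) = 2 + 2*k by ring, pow_add]
            ring
  have key : ∀ k : ℕ, ∃ A Bc : ℂ,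
      (P^k) v = v + A • Finsupp.single a 1 + Bc • Finsupp.single b 1 := by
    intro k
    induction k with
    | zero => exact ⟨0, 0, by simp⟩
    | succ k ih =>
      obtain ⟨A, Bc, hAB⟩ := ih
      refine ⟨A - 2 * ff M a (sigmaRep M b ((P^k) v)), Bc - 2 * ff M b ((P^k) v), ?_⟩
      rw [pow_succ', Module.End.mul_apply]
      conv_lhs => rw [hP, Module.End.mul_apply]
      rw [sigmaRep_apply, sigmaRep_apply, hAB]
      module
  obtain ⟨A, Bc, hAB⟩ := key (M a b)
  have hz := key2 E hE (M a b)
  have hw := key2 F hF (M a b)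
  rw [hEm, one_mul] at hz
  rw [hFm, one_mul] at hw
  have hyv : ff M b ((P ^ M a b) v) = ff M b v := by
    have h1 : (E - F) * (ff M b ((P ^ M a b) v) - ff M b v) = 0 := by
      linear_combination hz - hw
    rcases mul_eq_zero.mp h1 with h2 | h2
    · exact absurd (sub_eq_zero.mp h2) hEneF
    · exact sub_eq_zero.mp h2
  have hxv : ff M a ((P ^ M a b) v) = ff M a v := by
    linear_combination hz - E * hyv
  have hffa : ff M a ((P ^ M a b) v) = ff M a v + (A + Bc * cc M a b) := by
    rw [hAB, map_add, map_add, map_smul, map_smul, ff_single, ff_single, cc_diag,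
      smul_eq_mul, smul_eq_mul]
    ring
  have hffb : ff M b ((P ^ M a b) v) = ff M b v + (A * cc M a b + Bc) := by
    rw [hAB, map_add, map_add, map_smul, map_smul, ff_single, ff_single, cc_diag,
      cc_symm M b a, smul_eq_mul, smul_eq_mul]
    ring
  have e1 : A + Bc * cc M a b = 0 := by linear_combination hxv - hffa
  have e2 : A * cc M a b + Bc = 0 := by linear_combination hyv - hffb
  have hcsq : 1 - (cc M a b)^2 ≠ 0 := by
    rw [hc]
    intro hcontra
    have hs2 : (Real.sin θ : ℂ)^2 = 0 := by linear_combination hID + hcontra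
    exact (Complex.ofReal_ne_zero.mpr hsin) (sq_eq_zero_iff.mp hs2)
  have hA0 : A = 0 := by
    have h3 : A * (1 - (cc M a b)^2) = 0 := by linear_combination e1 - cc M a b * e2
    rcases mul_eq_zero.mp h3 with h | h
    exacts [h, absurd h hcsq]
  have hB0 : Bc = 0 := by
    have h3 : Bc * (1 - (cc M a b)^2) = 0 := by linear_combination e2 - cc M a b * e1
    rcases mul_eq_zero.mp h3 with h | h
    exacts [h, absurd h hcsq]
  rw [hAB, hA0, hB0, zero_smul, zero_smul, add_zero, add_zero, Module.End.one_apply]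

theorem sigma_liftable : M.IsLiftable (fun a => sigmaRep M a) := by
  intro a b
  rcases Nat.lt_or_ge (M a b) 2 with h | h
  · rcases (by omega : M a b = 0 ∨ M a b = 1) with h0 | h1
    · rw [h0, pow_zero]
    · have hab : a = b := by
        by_contra hne
        exact M.off_diagonal a b hne h1
      subst hab
      rw [h1, pow_one]
      exact sigmaRep_invol M a
  · exact sigma_pair_pow M a b h

theorem simple_injective {W : Type*} [Group W] (cs : CoxeterSystem M W) :
    Function.Injective cs.simple := by
  intro i j hij
  by_contra hne
  have h := congrArg (cs.lift ⟨fun a => sigmaRep M a, sigma_liftable M⟩) hij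
  rw [cs.lift_apply_simple, cs.lift_apply_simple] at h
  have hv := LinearMap.congr_fun h (Finsupp.single i (1:ℂ))
  rw [sigmaRep_apply, sigmaRep_apply, ff_single, ff_single, cc_diag] at hv
  have hcoord := DFunLike.congr_fun hv i
  simp only [Finsupp.sub_apply, Finsupp.smul_apply, Finsupp.single_eq_same,
    smul_eq_mul] at hcoord
  rw [Finsupp.single_eq_of_ne' (Ne.symm hne)] at hcoord
  norm_num at hcoord


end InjectivityRep

section Combinatorics

variable {B W : Type*} [Group W] {M : CoxeterMatrix B} (cs : CoxeterSystem M W)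

local prefix:100 "s" => cs.simple
local prefix:100 "π" => cs.wordProd
local prefix:100 "ℓ" => cs.length
local prefix:100 "ris" => cs.rightInvSeq

lemma drop_alternatingWord (i j : B) (k n : ℕ) :
    (alternatingWord i j n).drop k = alternatingWord i j (n - k) := by
  induction k generalizing n with
  | zero => simp
  | succ k ih =>
    cases n with
    | zero => simp [alternatingWord]
    | succ n =>
      rw [alternatingWord_succ' i j n, List.drop_succ_cons, ih n]
      congr 1
      omega

lemma getElem?_alternatingWord (i j : B) (n k : ℕ) (h : k < n) :
    (alternatingWord i j n)[k]? = some (if Even (n - k - 1) then j else i) := by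
  have h1 : (alternatingWord i j n)[k]? = ((alternatingWord i j n).drop k).head? := by
    rw [← List.head?_drop]
  rw [h1, drop_alternatingWord]
  have h2 : n - k = (n - k - 1) + 1 := by omega
  rw [h2, alternatingWord_succ' i j (n - k - 1)]
  rfl

lemma wordProd_alternatingWord_succ (i j : B) (l : ℕ) :
    π (alternatingWord i j (l + 1))
      = s (if Even l then j else i) * π (alternatingWord i j l) := by
  rw [alternatingWord_succ' i j l, wordProd_cons]

/-- Closed form for entries of the right inversion sequence of an alternating word. -/
lemma getD_rightInvSeq_alternatingWord (i j : B) (n k : ℕ) (h : k < n) :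
    (ris (alternatingWord i j n)).getD k 1
      = (π (alternatingWord i j (n - k - 1)))⁻¹ * π (alternatingWord i j (n - k)) := by
  rw [cs.getD_rightInvSeq, drop_alternatingWord]
  have hg : (alternatingWord i j n)[k]? = some (if Even (n - k - 1) then j else i) := by
    rw [getElem?_alternatingWord i j n k h]
  rw [hg]
  have h2 : n - k = (n - k - 1) + 1 := by omega
  rw [h2, wordProd_alternatingWord_succ cs i j (n - k - 1)]
  simp [Nat.sub_sub, mul_assoc]


lemma wordProd_alt_even (i j : B) (u : ℕ) :
    π (alternatingWord i j (2 * u)) = (s i * s j) ^ u := by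
  rw [cs.prod_alternatingWord_eq_mul_pow]
  have h : Even (2 * u) := even_two_mul u
  simp [h, Nat.mul_div_cancel_left u (by norm_num : 0 < 2)]

lemma wordProd_alt_odd (i j : B) (u : ℕ) :
    π (alternatingWord i j (2 * u + 1)) = s j * (s i * s j) ^ u := by
  rw [cs.prod_alternatingWord_eq_mul_pow]
  have h1 : ¬ Even (2 * u + 1) := by simp [Nat.even_add_one, Nat.even_iff, Nat.mul_mod]
  have h2 : (2 * u + 1) / 2 = u := by omega
  simp [h1, h2]

/-- Key dihedral pairing: entries of the inversion sequence repeat with period `m`. -/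
lemma alt_pair (i j : B) (m r : ℕ) (hq : (s i * s j) ^ m = 1) :
    (π (alternatingWord i j (m + r)))⁻¹ * π (alternatingWord i j (m + r + 1))
      = (π (alternatingWord i j r))⁻¹ * π (alternatingWord i j (r + 1)) := by
  set a := s i with ha
  set b := s j with hb
  set q := a * b with hqdef
  have hbb : b * b = 1 := cs.simple_mul_simple_self j
  have hbinv : b⁻¹ = b := cs.inv_simple j
  have hainv : a⁻¹ = a := by rw [ha]; exact cs.inv_simple i
  have h1 : b * q * b⁻¹ = q⁻¹ := by
    rw [hbinv, hqdef, mul_inv_rev, hainv, hbinv]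
    rw [show b * (a * b) * b = b * a * (b * b) from by group, hbb, mul_one]
  have hbqk : ∀ u : ℕ, b * q ^ u = (q ^ u)⁻¹ * b := by
    intro u
    have h2 : (q ^ u)⁻¹ = b * q ^ u * b⁻¹ := by
      rw [← inv_pow, ← h1, conj_pow]
    rw [h2]
    group
  have key : ∀ N : ℕ, (q ^ N)⁻¹ * (b * q ^ N) = (q ^ (2 * N))⁻¹ * b := by
    intro N
    rw [hbqk, two_mul, pow_add, mul_inv_rev, mul_assoc]
  have key2 : ∀ N : ℕ, (b * q ^ N)⁻¹ * q ^ (N + 1) = (q ^ (2 * N + 1))⁻¹ * b := by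
    intro N
    rw [mul_inv_rev, hbinv, mul_assoc, hbqk (N + 1), ← mul_assoc, ← mul_inv_rev, ← pow_add,
      show (N + 1) + N = 2 * N + 1 from by omega]
  have hmod : ∀ N : ℕ, q ^ (N + m) = q ^ N := by
    intro N
    rw [pow_add, hq, mul_one]
  rcases Nat.even_or_odd r with ⟨u, hu⟩ | ⟨u, hu⟩ <;>
    rcases Nat.even_or_odd m with ⟨w, hw⟩ | ⟨w, hw⟩
  · -- r = 2u, m = 2w
    rw [show m + r + 1 = 2 * (u + w) + 1 by omega, show m + r = 2 * (u + w) by omega,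
      show r + 1 = 2 * u + 1 by omega, show r = 2 * u by omega]
    rw [wordProd_alt_even, wordProd_alt_odd, wordProd_alt_even, wordProd_alt_odd,
      ← ha, ← hb, ← hqdef, key, key, show 2 * (u + w) = 2 * u + m by omega, hmod]
  · -- r = 2u, m = 2w + 1
    rw [show m + r + 1 = 2 * ((u + w) + 1) by omega, show m + r = 2 * (u + w) + 1 by omega,
      show r + 1 = 2 * u + 1 by omega, show r = 2 * u by omega]
    rw [wordProd_alt_odd, wordProd_alt_even, wordProd_alt_even, wordProd_alt_odd,
      ← ha, ← hb, ← hqdef, key2 (u + w), key u, show 2 * (u + w) + 1 = 2 * u + m by omega, hmod]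
  · -- r = 2u + 1, m = 2w
    rw [show m + r + 1 = 2 * ((u + w) + 1) by omega, show m + r = 2 * (u + w) + 1 by omega,
      show r + 1 = 2 * (u + 1) by omega, show r = 2 * u + 1 by omega]
    rw [wordProd_alt_odd, wordProd_alt_even, wordProd_alt_odd, wordProd_alt_even,
      ← ha, ← hb, ← hqdef, key2 (u + w), key2 u,
      show 2 * (u + w) + 1 = (2 * u + 1) + m by omega, hmod]
  · -- r = 2u + 1, m = 2w + 1
    rw [show m + r + 1 = 2 * (u + w + 1) + 1 by omega, show m + r = 2 * (u + w + 1) by omega,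
      show r + 1 = 2 * (u + 1) by omega, show r = 2 * u + 1 by omega]
    rw [wordProd_alt_even, wordProd_alt_odd, wordProd_alt_odd, wordProd_alt_even,
      ← ha, ← hb, ← hqdef, key (u + w + 1), key2 u,
      show 2 * (u + w + 1) = (2 * u + 1) + m by omega, hmod]


lemma ris_alt_double (i j : B) (m : ℕ) (hq : (s i * s j) ^ m = 1) :
    ris (alternatingWord i j (2 * m))
      = ris (alternatingWord i j m) ++ ris (alternatingWord i j m) := by
  have hdrop : (ris (alternatingWord i j (2 * m))).drop m = ris (alternatingWord i j m) := by
    rw [← cs.rightInvSeq_drop, drop_alternatingWord, show 2 * m - m = m by omega]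
  have htake : (ris (alternatingWord i j (2 * m))).take m = ris (alternatingWord i j m) := by
    apply List.ext_getElem
    · simp [length_alternatingWord]
      omega
    · intro k h1 h2
      have hk : k < m := by
        simpa [length_alternatingWord] using h2
      rw [List.getElem_take]
      rw [← List.getD_eq_getElem _ 1, ← List.getD_eq_getElem _ 1]
      rw [getD_rightInvSeq_alternatingWord cs i j (2 * m) k (by omega),
        getD_rightInvSeq_alternatingWord cs i j m k hk,
        show 2 * m - k - 1 = m + (m - k - 1) by omega,
        show 2 * m - k = m + (m - k - 1) + 1 by omega,
        alt_pair cs i j m (m - k - 1) hq,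
        show m - k - 1 + 1 = m - k by omega]
  conv_lhs => rw [← List.take_append_drop m (ris (alternatingWord i j (2 * m)))]
  rw [htake, hdrop]

/-- Count (mod 2) of occurrences of `u` in the right inversion sequence of `ω`. -/
noncomputable def cntR (ω : List B) (u : W) : ZMod 2 :=
  ((ris ω).map (fun t => if t = u then (1 : ZMod 2) else 0)).sum

lemma rightInvSeq_cons' (i : B) (ω : List B) :
    ris (i :: ω) = ((π ω)⁻¹ * s i * π ω) :: ris ω := rfl

lemma cntR_nil (u : W) : cntR cs [] u = 0 := by simp [cntR]

lemma cntR_cons (i : B) (ω : List B) (u : W) :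
    cntR cs (i :: ω) u = (if (π ω)⁻¹ * s i * π ω = u then (1 : ZMod 2) else 0) + cntR cs ω u := by
  simp [cntR, rightInvSeq_cons']

lemma cntR_alt_double (i j : B) (m : ℕ) (hq : (s i * s j) ^ m = 1) (u : W) :
    cntR cs (alternatingWord i j (2 * m)) u = 0 := by
  have h2 : ∀ z : ZMod 2, z + z = 0 := by decide
  rw [cntR, ris_alt_double cs i j m hq, List.map_append, List.sum_append]
  exact h2 _

lemma mem_of_cntR_ne_zero {ω : List B} {u : W} (h : cntR cs ω u ≠ 0) : u ∈ ris ω := by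
  by_contra hmem
  apply h
  apply List.sum_eq_zero
  intro x hx
  obtain ⟨t, ht, rfl⟩ := List.mem_map.mp hx
  have : t ≠ u := fun he => hmem (he ▸ ht)
  simp [this]

/-- The generator of the mod-2 reflection-counting representation. -/
noncomputable def gperm (i : B) : Equiv.Perm (W × ZMod 2) :=
  Function.Involutive.toPerm
    (fun p => (s i * p.1 * s i, p.2 + if p.1 = s i then 1 else 0)) (by
      intro p
      have h2 : ∀ z : ZMod 2, z + z = 0 := by decide
      apply Prod.ext
      · show s i * (s i * p.1 * s i) * s i = p.1
        rw [show s i * (s i * p.1 * s i) * s i = (s i * s i) * p.1 * (s i * s i) from by group,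
          cs.simple_mul_simple_self, one_mul, mul_one]
      · show p.2 + (if p.1 = s i then 1 else 0) + (if s i * p.1 * s i = s i then (1 : ZMod 2) else 0) = p.2
        have hcond : (s i * p.1 * s i = s i) ↔ (p.1 = s i) := by
          constructor
          · intro h
            rw [show p.1 = s i * (s i * p.1 * s i) * s i from by
              rw [show s i * (s i * p.1 * s i) * s i = (s i * s i) * p.1 * (s i * s i) from by group,
                cs.simple_mul_simple_self, one_mul, mul_one], h,
              show s i * s i * s i = s i * (s i * s i) from by group, cs.simple_mul_simple_self,
              mul_one]
          · intro h
            rw [h, show s i * s i * s i = s i * (s i * s i) from by group,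
              cs.simple_mul_simple_self, mul_one]
        simp only [hcond]
        rw [add_assoc, h2]
        · exact add_zero _
        )

lemma gperm_apply (i : B) (p : W × ZMod 2) :
    gperm cs i p = (s i * p.1 * s i, p.2 + if p.1 = s i then 1 else 0) := rfl

lemma prod_gperm (ω : List B) (p : W × ZMod 2) :
    ((ω.map (gperm cs)).prod) p = (π ω * p.1 * (π ω)⁻¹, p.2 + cntR cs ω p.1) := by
  induction ω generalizing p with
  | nil => simp [cntR_nil]
  | cons i ω ih =>
    rw [List.map_cons, List.prod_cons, Equiv.Perm.mul_apply, ih, gperm_apply]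
    have hcond : (π ω * p.1 * (π ω)⁻¹ = s i) ↔ ((π ω)⁻¹ * s i * π ω = p.1) := by
      constructor
      · intro h; rw [← h]; group
      · intro h; rw [← h]; group
    apply Prod.ext
    · show s i * (π ω * p.1 * (π ω)⁻¹) * s i = π (i :: ω) * p.1 * (π (i :: ω))⁻¹
      rw [wordProd_cons, mul_inv_rev, cs.inv_simple]
      group
    · show p.2 + cntR cs ω p.1 + (if π ω * p.1 * (π ω)⁻¹ = s i then (1 : ZMod 2) else 0)
        = p.2 + cntR cs (i :: ω) p.1
      rw [cntR_cons]
      simp only [hcond]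
      ring

lemma alternatingWord_two_mul_succ (i j : B) (n : ℕ) :
    alternatingWord i j (2 * (n + 1)) = i :: j :: alternatingWord i j (2 * n) := by
  rw [show 2 * (n + 1) = (2 * n + 1) + 1 by omega, alternatingWord_succ',
    alternatingWord_succ']
  have h1 : ¬ Even (2 * n + 1) := by simp [Nat.even_add_one, Nat.even_iff, Nat.mul_mod]
  have h2 : Even (2 * n) := even_two_mul n
  simp [h1, h2]

lemma prod_map_alt {G : Type*} [Monoid G] (f : B → G) (i j : B) (n : ℕ) :
    ((alternatingWord i j (2 * n)).map f).prod = (f i * f j) ^ n := by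
  induction n with
  | zero => simp [alternatingWord]
  | succ n ih =>
    rw [alternatingWord_two_mul_succ, List.map_cons, List.map_cons, List.prod_cons,
      List.prod_cons, ih, pow_succ']
    group

theorem gperm_liftable : M.IsLiftable (fun i => gperm cs i) := by
  intro i j
  rcases Nat.eq_zero_or_pos (M i j) with h0 | hpos
  · rw [h0, pow_zero]
  · have hq : (s i * s j) ^ M i j = 1 := cs.simple_mul_simple_pow i j
    rw [← prod_map_alt (fun i => gperm cs i) i j (M i j)]
    apply Equiv.ext
    intro p
    rw [prod_gperm, cntR_alt_double cs i j (M i j) hq, wordProd_alt_even cs i j (M i j), hq]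
    apply Prod.ext <;> simp

/-- The mod-2 reflection-counting representation of the Coxeter group. -/
noncomputable def bigPhi : W →* Equiv.Perm (W × ZMod 2) :=
  cs.lift ⟨fun i => gperm cs i, gperm_liftable cs⟩

lemma bigPhi_wordProd (ω : List B) : bigPhi cs (π ω) = (ω.map (gperm cs)).prod := by
  induction ω with
  | nil => simp [wordProd_nil]
  | cons i ω ih =>
    rw [wordProd_cons, List.map_cons, List.prod_cons, map_mul, ih, bigPhi,
      cs.lift_apply_simple]

/-- Mod-2 number of times a reflection `u` occurs in inversion sequences of words for `w`. -/
noncomputable def nn (w u : W) : ZMod 2 := (bigPhi cs w (u, 0)).2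

lemma nn_wordProd (ω : List B) (u : W) : nn cs (π ω) u = cntR cs ω u := by
  rw [nn, bigPhi_wordProd, prod_gperm]
  simp

lemma bigPhi_apply (w : W) (p : W × ZMod 2) :
    bigPhi cs w p = (w * p.1 * w⁻¹, p.2 + nn cs w p.1) := by
  obtain ⟨ω, rfl⟩ := cs.wordProd_surjective w
  rw [bigPhi_wordProd, prod_gperm, nn_wordProd]

lemma nn_mul (w₁ w₂ u : W) :
    nn cs (w₁ * w₂) u = nn cs w₂ u + nn cs w₁ (w₂ * u * w₂⁻¹) := by
  rw [nn, map_mul, Equiv.Perm.mul_apply, bigPhi_apply cs w₂ (u, 0), bigPhi_apply]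
  simp [nn]

lemma nn_one (u : W) : nn cs 1 u = 0 := by
  rw [nn, map_one]
  rfl

lemma nn_simple (i : B) (u : W) : nn cs (s i) u = if s i = u then 1 else 0 := by
  rw [← cs.wordProd_singleton i, nn_wordProd, cntR_cons]
  simp [cntR_nil]

lemma nn_refl (t : W) (ht : cs.IsReflection t) : nn cs t t = 1 := by
  obtain ⟨w, i, rfl⟩ := ht
  have hsolve : ∀ a b : ZMod 2, a + b = 0 → a + 1 + b = 1 := by decide
  have h0 : nn cs w⁻¹ (w * s i * w⁻¹) + nn cs w (s i) = 0 := by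
    have h := nn_mul cs w w⁻¹ (w * s i * w⁻¹)
    rw [mul_inv_cancel, nn_one,
      show w⁻¹ * (w * s i * w⁻¹) * w⁻¹⁻¹ = s i from by group] at h
    exact h.symm
  have e2 : (s i * w⁻¹) * (w * s i * w⁻¹) * (s i * w⁻¹)⁻¹ = s i := by
    rw [mul_inv_rev, inv_inv, cs.inv_simple,
      show s i * w⁻¹ * (w * s i * w⁻¹) * (w * s i) = s i * (s i * s i) from by group,
      cs.simple_mul_simple_self, mul_one]
  have hmain := nn_mul cs w (s i * w⁻¹) (w * s i * w⁻¹)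
  rw [← mul_assoc, e2] at hmain
  have hsub := nn_mul cs (s i) w⁻¹ (w * s i * w⁻¹)
  rw [show w⁻¹ * (w * s i * w⁻¹) * w⁻¹⁻¹ = s i from by group, nn_simple, if_pos rfl] at hsub
  rw [hmain, hsub]
  exact hsolve _ _ h0

lemma strongExchange {t w : W} (ht : cs.IsReflection t) (hlen : ℓ (w * t) < ℓ w)
    {ω : List B} (hω : π ω = w) : t ∈ ris ω := by
  have htinv : t⁻¹ = t := ht.inv
  have htt : t * t = 1 := ht.mul_self
  have h1 : nn cs w t = 1 := by
    have hsplit : nn cs w t = nn cs t t + nn cs (w * t) (t * t * t⁻¹) := by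
      conv_lhs => rw [show w = (w * t) * t by rw [mul_assoc, htt, mul_one]]
      rw [nn_mul]
    rw [htt, one_mul, htinv, nn_refl cs t ht] at hsplit
    have h2 : nn cs (w * t) t = 0 := by
      by_contra hne
      obtain ⟨ψ, hred, hψ⟩ := cs.exists_reduced_word' (w * t)
      have hmem : t ∈ ris ψ := by
        apply mem_of_cntR_ne_zero cs
        rw [← nn_wordProd, ← hψ]
        exact hne
      have hinv := (cs.isRightInversion_of_mem_rightInvSeq hred hmem).2
      rw [← hψ, mul_assoc, htt, mul_one] at hinv
      omega
    rw [hsplit, h2, add_zero]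
  apply mem_of_cntR_ne_zero cs
  rw [← nn_wordProd, hω, h1]
  decide


lemma exchange_erase {t w : W} (ht : cs.IsReflection t) (hlen : ℓ (w * t) < ℓ w)
    {ω : List B} (hω : π ω = w) :
    ∃ k, k < ω.length ∧ w * t = π (ω.eraseIdx k) := by
  have hmem := strongExchange cs ht hlen hω
  obtain ⟨k, hk, hget⟩ := List.mem_iff_getElem.mp hmem
  rw [cs.length_rightInvSeq] at hk
  refine ⟨k, hk, ?_⟩
  rw [← hω, ← cs.wordProd_mul_getD_rightInvSeq ω k]
  congr 1
  rw [List.getD_eq_getElem _ 1 (by rw [cs.length_rightInvSeq]; exact hk)]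
  exact hget.symm

lemma exists_reduced_word_subset (J : Set B) :
    ∀ n (ω : List B), ω.length = n → (∀ i ∈ ω, i ∈ J) →
      ∃ ψ, cs.IsReduced ψ ∧ π ψ = π ω ∧ (∀ i ∈ ψ, i ∈ J) := by
  intro n
  induction n using Nat.strong_induction_on with
  | _ n ih =>
    intro ω hlen hJ
    classical
    by_cases hred : cs.IsReduced ω
    · exact ⟨ω, hred, rfl, hJ⟩
    · have hne : ω ≠ [] := by
        rintro rfl
        exact hred (by simp [CoxeterSystem.IsReduced])
      have hlenpos : 1 ≤ ω.length := List.length_pos_iff.mpr hne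
      have hwit : ¬ cs.IsReduced (ω.take ((ω.length - 1) + 1)) := by
        rw [show ω.length - 1 + 1 = ω.length by omega, List.take_length]
        exact hred
      have hex : ∃ j, ¬ cs.IsReduced (ω.take (j + 1)) := ⟨ω.length - 1, hwit⟩
      set j := Nat.find hex with hjdef
      have hj : ¬ cs.IsReduced (ω.take (j + 1)) := Nat.find_spec hex
      have hjlt : j < ω.length := by
        have hle : j ≤ ω.length - 1 := Nat.find_le hwit
        omega
      have hprev : cs.IsReduced (ω.take j) := by
        rcases Nat.eq_zero_or_pos j with h0 | h0
        · rw [h0, List.take_zero]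
          simp [CoxeterSystem.IsReduced]
        · have := Nat.find_min hex (show j - 1 < j by omega)
          rw [not_not, show j - 1 + 1 = j by omega] at this
          exact this
      obtain ⟨c, hc, hcm⟩ : ∃ c, ω.take (j + 1) = ω.take j ++ [c] ∧ c ∈ ω :=
        ⟨ω[j], by rw [List.take_succ, List.getElem?_eq_getElem hjlt]; rfl,
          List.getElem_mem hjlt⟩
      set u := π (ω.take j) with hu
      have hu_len : ℓ u = j := by
        have := hprev
        unfold CoxeterSystem.IsReduced at this
        rw [← hu] at this
        rw [this, List.length_take]
        omega
      have hlt : ℓ (u * s c) < ℓ u := by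
        have hne2 : ℓ (u * s c) ≠ j + 1 := by
          intro heq
          apply hj
          unfold CoxeterSystem.IsReduced
          rw [hc, wordProd_append, wordProd_singleton, ← hu, heq, List.length_append,
            List.length_take, List.length_singleton]
          omega
        rcases cs.length_mul_simple u c with h | h
        · omega
        · omega
      obtain ⟨k, hk, herase⟩ := exchange_erase cs (cs.isReflection_simple c) hlt
        (show π (ω.take j) = u from rfl)
      set ω' := (ω.take j).eraseIdx k ++ ω.drop (j + 1) with hω'
      have hsplit : π ω = u * (s c * π (ω.drop (j + 1))) := by
        conv_lhs => rw [← List.take_append_drop (j + 1) ω]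
        rw [wordProd_append, hc, wordProd_append, wordProd_singleton, mul_assoc]
      have hπ : π ω' = π ω := by
        rw [hω', wordProd_append, ← herase, hsplit, mul_assoc]
      have hlen' : ω'.length < n := by
        have h1 := List.length_eraseIdx_add_one hk
        rw [hω', List.length_append, List.length_drop]
        rw [List.length_take] at h1
        omega
      have hJ' : ∀ i ∈ ω', i ∈ J := by
        intro i hi
        rcases List.mem_append.mp hi with h | h
        · exact hJ i (((List.eraseIdx_sublist (ω.take j) k).trans (List.take_sublist j ω)).subset h)
        · exact hJ i ((List.drop_sublist (j + 1) ω).subset h)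
      obtain ⟨ψ, h1, h2, h3⟩ := ih ω'.length (by omega) ω' rfl hJ'
      exact ⟨ψ, h1, h2.trans hπ, h3⟩

lemma wordProd_mem_closure {J : Set B} {ω : List B} (h : ∀ i ∈ ω, i ∈ J) :
    π ω ∈ Subgroup.closure (cs.simple '' J) := by
  induction ω with
  | nil =>
    rw [wordProd_nil]
    exact one_mem _
  | cons i ω ih =>
    rw [wordProd_cons]
    exact mul_mem (Subgroup.subset_closure ⟨i, h i (List.mem_cons_self), rfl⟩)
      (ih fun i' hi' => h i' (List.mem_cons_of_mem _ hi'))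

lemma exists_word_of_mem_closure {J : Set B} {w : W}
    (h : w ∈ Subgroup.closure (cs.simple '' J)) :
    ∃ ω : List B, π ω = w ∧ ∀ i ∈ ω, i ∈ J := by
  induction h using Subgroup.closure_induction with
  | mem x hx =>
    obtain ⟨i, hi, rfl⟩ := hx
    exact ⟨[i], cs.wordProd_singleton i, by simpa⟩
  | one => exact ⟨[], cs.wordProd_nil, by simp⟩
  | mul x y hx hy ihx ihy =>
    obtain ⟨ω₁, h1, hJ1⟩ := ihx
    obtain ⟨ω₂, h2, hJ2⟩ := ihy
    refine ⟨ω₁ ++ ω₂, by rw [wordProd_append, h1, h2], ?_⟩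
    intro i hi
    rcases List.mem_append.mp hi with h | h
    exacts [hJ1 i h, hJ2 i h]
  | inv x hx ihx =>
    obtain ⟨ω, h1, hJ1⟩ := ihx
    exact ⟨ω.reverse, by rw [wordProd_reverse, h1],
      fun i hi => hJ1 i (List.mem_reverse.mp hi)⟩

lemma exists_reduced_word_of_mem_closure {J : Set B} {w : W}
    (h : w ∈ Subgroup.closure (cs.simple '' J)) :
    ∃ ψ : List B, cs.IsReduced ψ ∧ π ψ = w ∧ ∀ i ∈ ψ, i ∈ J := by
  obtain ⟨ω₀, hπ₀, hJ₀⟩ := exists_word_of_mem_closure cs h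
  obtain ⟨ψ, h1, h2, h3⟩ := exists_reduced_word_subset cs J ω₀.length ω₀ rfl hJ₀
  exact ⟨ψ, h1, h2.trans hπ₀, h3⟩

lemma ris_mem_closure {J : Set B} {ω : List B} (hJ : ∀ i ∈ ω, i ∈ J) {t : W}
    (ht : t ∈ ris ω) : t ∈ Subgroup.closure (cs.simple '' J) := by
  induction ω with
  | nil => simp [rightInvSeq] at ht
  | cons i ω ih =>
    rw [rightInvSeq_cons'] at ht
    rcases List.mem_cons.mp ht with rfl | h
    · have hw := wordProd_mem_closure cs (fun i' hi' => hJ i' (List.mem_cons_of_mem _ hi'))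
      exact mul_mem (mul_mem (inv_mem hw)
        (Subgroup.subset_closure ⟨i, hJ i (List.mem_cons_self), rfl⟩)) hw
    · exact ih (fun i' hi' => hJ i' (List.mem_cons_of_mem _ hi')) h

theorem mem_J_of_reduced_word_of_mem_closure (hinj : Function.Injective cs.simple)
    {J : Set B} :
    ∀ n (ω : List B), ω.length = n → cs.IsReduced ω →
      π ω ∈ Subgroup.closure (cs.simple '' J) → ∀ i ∈ ω, i ∈ J := by
  intro n
  induction n using Nat.strong_induction_on with
  | _ n ih =>
    intro ω hn hred hmem i hi
    rcases List.eq_nil_or_concat ω with rfl | ⟨ω', c, rfl⟩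
    · simp at hi
    · have hw : π (ω'.concat c) = π ω' * s c := by
        rw [List.concat_eq_append, wordProd_append, wordProd_singleton]
      have hred' : cs.IsReduced ω' := by
        have h := hred.take ω'.length
        rwa [List.concat_eq_append, List.take_left] at h
      have hscc : s c * s c = 1 := cs.simple_mul_simple_self c
      have hlen : ℓ (π (ω'.concat c) * s c) < ℓ (π (ω'.concat c)) := by
        have h1 : ℓ (π (ω'.concat c)) = ω'.length + 1 := by
          have := hred
          unfold CoxeterSystem.IsReduced at this
          rw [this, List.concat_eq_append, List.length_append, List.length_singleton]
        have h2 : ℓ (π (ω'.concat c) * s c) = ℓ (π ω') := by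
          rw [hw, mul_assoc, hscc, mul_one]
        have h3 : ℓ (π ω') = ω'.length := hred'
        omega
      obtain ⟨ψ, hψred, hψπ, hψJ⟩ := exists_reduced_word_of_mem_closure cs hmem
      have hmemris : s c ∈ ris ψ :=
        strongExchange cs (cs.isReflection_simple c) hlen hψπ
      have hsc : s c ∈ Subgroup.closure (cs.simple '' J) := ris_mem_closure cs hψJ hmemris
      have hcJ : c ∈ J := by
        obtain ⟨τ, hτred, hτπ, hτJ⟩ := exists_reduced_word_of_mem_closure cs hsc
        have hτlen : τ.length = 1 := by
          have := hτred
          unfold CoxeterSystem.IsReduced at this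
          rw [hτπ, cs.length_simple] at this
          omega
        obtain ⟨d, rfl⟩ := List.length_eq_one_iff.mp hτlen
        have hdc : s d = s c := by simpa using hτπ
        have : d = c := hinj hdc
        exact this ▸ hτJ d (List.mem_singleton_self d)
      rcases List.mem_append.mp (by rwa [List.concat_eq_append] at hi) with h | h
      · have hw' : π ω' ∈ Subgroup.closure (cs.simple '' J) := by
          have he : π ω' = π (ω'.concat c) * s c := by
            rw [hw, mul_assoc, hscc, mul_one]
          rw [he]
          exact mul_mem hmem hsc
        have hn' : ω'.length < n := by
          rw [← hn, List.concat_eq_append, List.length_append, List.length_singleton]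
          omega
        exact ih ω'.length hn' ω' rfl hred' hw' i h
      · have : i = c := by simpa using h
        exact this ▸ hcJ


end Combinatorics

end CoxProof

/-- A face `W_J x` of the Coxeter complex lies in the fixed hyperplane `H_t` of a reflection
`t` (meaning `W_J x t = W_J x`) if and only if the support of `x t x⁻¹` is contained in `J`. -/
theorem statement4 (cs : CoxeterSystem M W) [Finite W] (J : Set B) (x t : W)
    (ht : cs.IsReflection t) :
    (fun w => w * t) '' cs.coset J x = cs.coset J x ↔
      cs.support (x * t * x⁻¹) ⊆ J := by
  have mem_coset_iff : ∀ w : W, w ∈ cs.coset J x ↔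
      ∃ h ∈ Subgroup.closure (cs.simple '' J), h * x = w := by
    intro w
    simp only [CoxeterSystem.coset, Set.mem_image, SetLike.mem_coe]
  have lhs_iff : ((fun w => w * t) '' cs.coset J x = cs.coset J x) ↔
      x * t * x⁻¹ ∈ Subgroup.closure (cs.simple '' J) := by
    constructor
    · intro heq
      have hx : x * t ∈ (fun w => w * t) '' cs.coset J x :=
        ⟨x, (mem_coset_iff x).mpr ⟨1, one_mem _, one_mul x⟩, rfl⟩
      rw [heq] at hx
      obtain ⟨h', hh', hmul⟩ := (mem_coset_iff (x * t)).mp hx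
      have he : x * t * x⁻¹ = h' := by rw [← hmul]; group
      rw [he]
      exact hh'
    · intro hmem
      ext w
      constructor
      · rintro ⟨v, hv, rfl⟩
        obtain ⟨h', hh', rfl⟩ := (mem_coset_iff v).mp hv
        exact (mem_coset_iff _).mpr ⟨h' * (x * t * x⁻¹), mul_mem hh' hmem, by group⟩
      · intro hw
        obtain ⟨h', hh', rfl⟩ := (mem_coset_iff w).mp hw
        refine ⟨h' * (x * t * x⁻¹)⁻¹ * x,
          (mem_coset_iff _).mpr ⟨h' * (x * t * x⁻¹)⁻¹, mul_mem hh' (inv_mem hmem), rfl⟩, ?_⟩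
        show h' * (x * t * x⁻¹)⁻¹ * x * t = h' * x
        group
  have rhs_iff : (cs.support (x * t * x⁻¹) ⊆ J) ↔
      x * t * x⁻¹ ∈ Subgroup.closure (cs.simple '' J) := by
    constructor
    · intro hsub
      obtain ⟨ω, hred, hπ⟩ := cs.exists_reduced_word' (x * t * x⁻¹)
      rw [hπ]
      apply CoxProof.wordProd_mem_closure
      intro i hi
      exact hsub ⟨ω, hred, hπ.symm, hi⟩
    · intro hmem i hi
      obtain ⟨ω, hred, hπ, hiω⟩ := hi
      exact CoxProof.mem_J_of_reduced_word_of_mem_closure cs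
        (CoxProof.simple_injective M cs) ω.length ω rfl hred
        (by rw [hπ]; exact hmem) i hiω
  rw [lhs_iff, rhs_iff]
end

section
/- Let W act on R^n as a finite reflection group, x ∈ W, and t a reflection with fixed hyperplane H_t. Identify chambers of the reflection arrangement with elements of W via the simply transitive action. Then the intersection of the closed chamber corresponding to x with H_t equals the closed face of the Coxeter complex corresponding to the coset W_{J(xtx^{-1})} x, where J(xtx^{-1}) is the support of xtx^{-1}. -/
open CoxeterSystem

variable {B W : Type*} [Group W] {M : CoxeterMatrix B}

namespace Stmt6Aux

noncomputable def ind {W : Type*} (x y : W) : ZMod 2 :=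
  letI := Classical.propDecidable (x = y)
  if x = y then 1 else 0

lemma ind_congr {W : Type*} {x y x' y' : W} (h : (x = y) ↔ (x' = y')) :
    ind x y = ind x' y' := by
  unfold ind
  by_cases hx : x = y
  · rw [if_pos hx, if_pos (h.mp hx)]
  · rw [if_neg hx, if_neg (fun hh => hx (h.mpr hh))]

lemma ind_self {W : Type*} (x : W) : ind x x = 1 := by
  unfold ind; simp

lemma zmod2_add_self (r : ZMod 2) : r + r = 0 := by
  fin_cases r <;> decide

lemma conj_eq_iff {G : Type*} [Group G] (a t c : G) :
    a * t * a⁻¹ = c ↔ t = a⁻¹ * c * a := by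
  constructor <;> rintro rfl <;> group

variable (cs : CoxeterSystem M W)

local prefix:100 "s" => cs.simple
local prefix:100 "π" => cs.wordProd
local prefix:100 "ℓ" => cs.length
local prefix:100 "ris" => cs.rightInvSeq

lemma conj_simple_eq_iff (i : B) (t c : W) :
    s i * t * s i = c ↔ t = s i * c * s i := by
  have := conj_eq_iff (s i) t c
  rw [cs.inv_simple] at this
  exact this

noncomputable def etaFun (i : B) : W × ZMod 2 → W × ZMod 2 :=
  fun p => (s i * p.1 * s i, p.2 + ind p.1 (s i))

lemma ind_conj_simple (i : B) (t : W) : ind (s i * t * s i) (s i) = ind t (s i) := by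
  apply ind_congr
  rw [conj_simple_eq_iff cs]
  constructor
  · rintro rfl; rw [cs.simple_mul_simple_self]; group
  · rintro rfl; rw [cs.simple_mul_simple_self]; group

lemma etaFun_involutive (i : B) : Function.Involutive (etaFun cs i) := by
  rintro ⟨t, e⟩
  unfold etaFun
  refine Prod.ext ?_ ?_
  · show s i * (s i * t * s i) * s i = t
    calc s i * (s i * t * s i) * s i = (s i * s i) * t * (s i * s i) := by group
    _ = t := by rw [cs.simple_mul_simple_self]; group
  · show e + ind t (s i) + ind (s i * t * s i) (s i) = e
    rw [ind_conj_simple cs, add_assoc, zmod2_add_self, add_zero]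

noncomputable def eta (i : B) : Equiv.Perm (W × ZMod 2) :=
  Function.Involutive.toPerm _ (etaFun_involutive cs i)

lemma eta_apply (i : B) (t : W) (e : ZMod 2) :
    eta cs i (t, e) = (s i * t * s i, e + ind t (s i)) := rfl

lemma aux_pow {G : Type*} [Group G] (a c d : G) (h : c * d = a * c) (k : ℕ) :
    a * (a ^ k * c) * d = a ^ (k + 2) * c := by
  calc a * (a ^ k * c) * d = (a * a ^ k) * (c * d) := by group
    _ = a ^ (k + 1) * (a * c) := by rw [← pow_succ', h]
    _ = a ^ (k + 2) * c := by rw [← mul_assoc, ← pow_succ]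

lemma key_conj (i j : B) (k : ℕ) :
    (s i * s j)⁻¹ * ((s j * s i) ^ k * s j) * (s i * s j) = (s j * s i) ^ (k + 2) * s j := by
  have hinv : (s i * s j)⁻¹ = s j * s i := by
    rw [mul_inv_rev, cs.inv_simple, cs.inv_simple]
  rw [hinv]
  exact aux_pow _ _ _ (by group) k

lemma eta_mul_pow (i j : B) (m : ℕ) (t : W) (e : ZMod 2) :
    ((eta cs i * eta cs j) ^ m) (t, e) =
      ((s i * s j) ^ m * t * ((s i * s j) ^ m)⁻¹,
        e + ∑ k ∈ Finset.range (2 * m), ind t ((s j * s i) ^ k * s j)) := by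
  induction m generalizing t e with
  | zero => simp
  | succ m ih =>
    rw [pow_succ, Equiv.Perm.mul_apply]
    have hg : (eta cs i * eta cs j) (t, e)
        = ((s i * s j) * t * (s i * s j)⁻¹,
            e + ind t ((s j * s i) ^ 0 * s j) + ind t ((s j * s i) ^ 1 * s j)) := by
      rw [Equiv.Perm.mul_apply, eta_apply, eta_apply]
      refine Prod.ext ?_ ?_
      · show s i * (s j * t * s j) * s i = _
        rw [mul_inv_rev, cs.inv_simple, cs.inv_simple]; group
      · show e + ind t (s j) + ind (s j * t * s j) (s i) = _
        congr 1
        · congr 1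
          apply ind_congr; rw [pow_zero, one_mul]
        · apply ind_congr
          rw [conj_simple_eq_iff cs]
          constructor
          · rintro rfl; rw [pow_one]
          · rintro rfl; rw [pow_one]
    rw [hg, ih]
    refine Prod.ext ?_ ?_
    · show (s i * s j) ^ m * (s i * s j * t * (s i * s j)⁻¹) * ((s i * s j) ^ m)⁻¹ = _
      rw [pow_succ]
      group
    · show e + ind t ((s j * s i) ^ 0 * s j) + ind t ((s j * s i) ^ 1 * s j)
          + ∑ k ∈ Finset.range (2 * m), ind (s i * s j * t * (s i * s j)⁻¹) ((s j * s i) ^ k * s j)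
        = e + ∑ k ∈ Finset.range (2 * (m + 1)), ind t ((s j * s i) ^ k * s j)
      have hsum : ∀ k, ind (s i * s j * t * (s i * s j)⁻¹) ((s j * s i) ^ k * s j)
          = ind t ((s j * s i) ^ (k + 1 + 1) * s j) := by
        intro k
        apply ind_congr
        rw [conj_eq_iff, key_conj cs]
      have h2 : 2 * (m + 1) = (2 * m + 1) + 1 := by omega
      rw [h2, Finset.sum_range_succ', Finset.sum_range_succ']
      simp only [hsum]
      ring
  
lemma eta_liftable : M.IsLiftable (eta cs) := by
  intro i j
  apply Equiv.ext
  rintro ⟨t, e⟩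
  rw [eta_mul_pow cs i j (M i j) t e]
  rw [cs.simple_mul_simple_pow i j]
  have hb : (s j * s i) ^ M i j = 1 := cs.simple_mul_simple_pow' i j
  have : ∑ k ∈ Finset.range (2 * M i j), ind t ((s j * s i) ^ k * s j) = 0 := by
    rw [two_mul, Finset.sum_range_add]
    have : ∀ k, ind t ((s j * s i) ^ (M i j + k) * s j) = ind t ((s j * s i) ^ k * s j) := by
      intro k
      apply ind_congr
      rw [pow_add, hb, one_mul]
    simp only [this]
    exact zmod2_add_self _
  rw [this]
  simp

noncomputable def phi : W →* Equiv.Perm (W × ZMod 2) :=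
  cs.lift ⟨eta cs, eta_liftable cs⟩

lemma phi_simple (i : B) : phi cs (s i) = eta cs i :=
  cs.lift_apply_simple (eta_liftable cs) i

lemma phi_wordProd (ω : List B) (t : W) (e : ZMod 2) :
    phi cs (π ω) (t, e) =
      (π ω * t * (π ω)⁻¹, e + ((ris ω).map (fun x => ind t x)).sum) := by
  induction ω generalizing t e with
  | nil => simp
  | cons i ω ih =>
    rw [cs.wordProd_cons, map_mul, Equiv.Perm.mul_apply, ih, phi_simple, eta_apply]
    have hr : ris (i :: ω) = (π ω)⁻¹ * s i * π ω :: ris ω := rfl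
    rw [hr]
    refine Prod.ext ?_ ?_
    · show s i * (π ω * t * (π ω)⁻¹) * s i = _
      rw [mul_inv_rev, cs.inv_simple]
      group
    · show e + ((ris ω).map (fun x => ind t x)).sum + ind (π ω * t * (π ω)⁻¹) (s i) = _
      simp only [List.map_cons, List.sum_cons]
      have : ind (π ω * t * (π ω)⁻¹) (s i) = ind t ((π ω)⁻¹ * s i * π ω) := by
        apply ind_congr
        rw [conj_eq_iff]
      rw [this]
      ring

noncomputable def nn (w t : W) : ZMod 2 := (phi cs w (t, 0)).2

lemma nn_wordProd (ω : List B) (t : W) :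
    nn cs (π ω) t = ((ris ω).map (fun x => ind t x)).sum := by
  unfold nn
  rw [phi_wordProd]
  simp

lemma phi_apply (w t : W) (e : ZMod 2) :
    phi cs w (t, e) = (w * t * w⁻¹, e + nn cs w t) := by
  obtain ⟨ω, rfl⟩ := cs.wordProd_surjective w
  rw [phi_wordProd, nn_wordProd]

lemma nn_mul (w₁ w₂ t : W) :
    nn cs (w₁ * w₂) t = nn cs w₂ t + nn cs w₁ (w₂ * t * w₂⁻¹) := by
  have h : phi cs (w₁ * w₂) (t, 0) = phi cs w₁ (phi cs w₂ (t, 0)) := by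
    rw [map_mul, Equiv.Perm.mul_apply]
  rw [phi_apply, phi_apply, phi_apply] at h
  have := congrArg Prod.snd h
  simpa using this

lemma nn_simple (i : B) (t : W) : nn cs (s i) t = ind t (s i) := by
  unfold nn
  rw [phi_simple, eta_apply]
  simp

lemma nn_refl_self (ω : List B) (i : B) :
    nn cs (π ω * s i * (π ω)⁻¹) (π ω * s i * (π ω)⁻¹) = 1 := by
  induction ω with
  | nil => simpa [ind_self] using nn_simple cs i (s i)
  | cons j ω ih =>
    rw [cs.wordProd_cons]
    set r := π ω * s i * (π ω)⁻¹ with hr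
    have hconj : s j * π ω * s i * (s j * π ω)⁻¹ = s j * r * (s j)⁻¹ := by
      rw [hr]; group
    rw [hconj, cs.inv_simple]
    have hz : s j * (s j * r * s j) * (s j)⁻¹ = r := by
      rw [cs.inv_simple]
      calc s j * (s j * r * s j) * s j = (s j * s j) * r * (s j * s j) := by group
        _ = r := by rw [cs.simple_mul_simple_self]; group
    have hz2 : r * r * r⁻¹ = r := by group
    rw [show s j * r * s j = (s j * r) * s j by group, nn_mul, nn_mul, hz, hz2,
      nn_simple, nn_simple, ih]
    rw [ind_conj_simple cs j r]
    rw [add_comm (1 : ZMod 2), ← add_assoc, zmod2_add_self, zero_add]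

lemma nn_refl_self' {t : W} (ht : cs.IsReflection t) : nn cs t t = 1 := by
  obtain ⟨u, i, rfl⟩ := ht
  obtain ⟨ω, rfl⟩ := cs.wordProd_surjective u
  exact nn_refl_self cs ω i

lemma mem_of_sum_ind_ne_zero {l : List W} {t : W}
    (h : (l.map (fun x => ind t x)).sum ≠ 0) : t ∈ l := by
  by_contra hmem
  apply h
  apply List.sum_eq_zero
  intro x hx
  obtain ⟨y, hy, rfl⟩ := List.mem_map.mp hx
  unfold ind
  rw [if_neg]
  rintro rfl
  exact hmem hy

lemma length_mul_lt_of_nn_eq_one {w t : W} (h : nn cs w t = 1) : ℓ (w * t) < ℓ w := by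
  obtain ⟨ω, hred, rfl⟩ := cs.exists_reduced_word' w
  rw [nn_wordProd] at h
  have hmem : t ∈ ris ω := mem_of_sum_ind_ne_zero (by rw [h]; exact one_ne_zero)
  obtain ⟨k, hk, hkt⟩ := List.getElem_of_mem hmem
  have hk' : k < ω.length := by
    have := cs.length_rightInvSeq ω
    omega
  have hgd : (ris ω).getD k 1 = t := by rw [List.getD_eq_getElem _ _ hk, hkt]
  have heq : π ω * t = π (ω.eraseIdx k) := by
    rw [← hgd]; exact cs.wordProd_mul_getD_rightInvSeq ω k
  have hlt : ℓ (π ω * t) < ω.length := by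
    calc ℓ (π ω * t) = ℓ (π (ω.eraseIdx k)) := by rw [heq]
      _ ≤ (ω.eraseIdx k).length := cs.length_wordProd_le _
      _ < ω.length := by
          rw [← List.length_eraseIdx_add_one hk']; omega
  have hred' : ℓ (π ω) = ω.length := hred
  omega

lemma nn_eq_one_of_lt {w t : W} (ht : cs.IsReflection t) (h : ℓ (w * t) < ℓ w) :
    nn cs w t = 1 := by
  have hwt : w * t * t = w := by rw [mul_assoc, ht.mul_self, mul_one]
  have h0 : nn cs (w * t) t = 0 := by
    rcases (by decide : ∀ r : ZMod 2, r = 0 ∨ r = 1) (nn cs (w * t) t) with h' | h'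
    · exact h'
    · exact absurd (hwt ▸ length_mul_lt_of_nn_eq_one cs h') (by omega)
  have : nn cs (w * t * t) t = nn cs t t + nn cs (w * t) (t * t * t⁻¹) := nn_mul cs (w * t) t t
  rw [hwt, nn_refl_self' cs ht, show t * t * t⁻¹ = t by rw [ht.mul_self, one_mul, ht.inv], h0, add_zero]
    at this
  exact this


lemma wordProd_mem {J : Set B} {τ : List B} (hτ : ∀ i ∈ τ, i ∈ J) :
    π τ ∈ Subgroup.closure (cs.simple '' J) := by
  induction τ with
  | nil => rw [cs.wordProd_nil]; exact one_mem _
  | cons i τ ih =>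
    rw [cs.wordProd_cons]
    exact mul_mem (Subgroup.subset_closure ⟨i, hτ i List.mem_cons_self, rfl⟩)
      (ih fun j hj => hτ j (List.mem_cons_of_mem i hj))

lemma exists_word_over {J : Set B} {z : W} (hz : z ∈ Subgroup.closure (cs.simple '' J)) :
    ∃ τ : List B, (∀ i ∈ τ, i ∈ J) ∧ π τ = z := by
  induction hz using Subgroup.closure_induction with
  | mem x hx =>
    obtain ⟨i, hi, rfl⟩ := hx
    exact ⟨[i], by simpa using hi, cs.wordProd_singleton i⟩
  | one => exact ⟨[], by simp, cs.wordProd_nil⟩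
  | mul x y hx hy ihx ihy =>
    obtain ⟨τ₁, h1, rfl⟩ := ihx
    obtain ⟨τ₂, h2, rfl⟩ := ihy
    exact ⟨τ₁ ++ τ₂, fun i hi => (List.mem_append.mp hi).elim (h1 i) (h2 i),
      cs.wordProd_append τ₁ τ₂⟩
  | inv x hx ihx =>
    obtain ⟨τ, h1, rfl⟩ := ihx
    exact ⟨τ.reverse, fun i hi => h1 i (List.mem_reverse.mp hi), cs.wordProd_reverse τ⟩

lemma mem_ris_closure {J : Set B} {τ : List B} (hτ : ∀ i ∈ τ, i ∈ J) {y : W}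
    (hy : y ∈ ris τ) : y ∈ Subgroup.closure (cs.simple '' J) := by
  induction τ with
  | nil => simp [CoxeterSystem.rightInvSeq] at hy
  | cons i τ ih =>
    have hrw : ris (i :: τ) = ((π τ)⁻¹ * s i * π τ) :: ris τ := rfl
    rw [hrw, List.mem_cons] at hy
    have hmem := wordProd_mem cs (fun j hj => hτ j (List.mem_cons_of_mem i hj))
    rcases hy with rfl | hy
    · exact mul_mem (mul_mem (inv_mem hmem)
        (Subgroup.subset_closure ⟨i, hτ i List.mem_cons_self, rfl⟩)) hmem
    · exact ih (fun j hj => hτ j (List.mem_cons_of_mem i hj)) hy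

lemma simple_mem_closure_of_descent {J : Set B} {z : W}
    (hz : z ∈ Subgroup.closure (cs.simple '' J)) {i : B} (h : ℓ (s i * z) < ℓ z) :
    s i ∈ Subgroup.closure (cs.simple '' J) := by
  obtain ⟨τ, hτ, rfl⟩ := exists_word_over cs hz
  have hlt : ℓ ((π τ)⁻¹ * s i) < ℓ ((π τ)⁻¹) := by
    rw [show (π τ)⁻¹ * s i = (s i * π τ)⁻¹ by rw [mul_inv_rev, cs.inv_simple],
      cs.length_inv, cs.length_inv]
    exact h
  have h1 : nn cs ((π τ)⁻¹) (s i) = 1 :=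
    nn_eq_one_of_lt cs (cs.isReflection_simple i) hlt
  rw [show (π τ)⁻¹ = π τ.reverse by rw [cs.wordProd_reverse], nn_wordProd] at h1
  have hmem : s i ∈ ris τ.reverse :=
    mem_of_sum_ind_ne_zero (by rw [h1]; exact one_ne_zero)
  exact mem_ris_closure cs (fun j hj => hτ j (List.mem_reverse.mp hj)) hmem

lemma support_closure {J : Set B} :
    ∀ ω : List B, cs.IsReduced ω → π ω ∈ Subgroup.closure (cs.simple '' J) →
      ∀ i ∈ ω, s i ∈ Subgroup.closure (cs.simple '' J) := by
  intro ω
  induction ω with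
  | nil => intro _ _ i hi; simp at hi
  | cons i₀ ω ih =>
    intro hred hz i hi
    have hlen : ℓ (π (i₀ :: ω)) = ω.length + 1 := by
      have : cs.IsReduced (i₀ :: ω) := hred
      simpa [CoxeterSystem.IsReduced] using this
    have hcancel : s i₀ * π (i₀ :: ω) = π ω := by
      rw [cs.wordProd_cons, ← mul_assoc, cs.simple_mul_simple_self, one_mul]
    have hd : ℓ (s i₀ * π (i₀ :: ω)) < ℓ (π (i₀ :: ω)) := by
      rw [hcancel, hlen]
      calc ℓ (π ω) ≤ ω.length := cs.length_wordProd_le ω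
        _ < ω.length + 1 := by omega
    have hs0 : s i₀ ∈ Subgroup.closure (cs.simple '' J) :=
      simple_mem_closure_of_descent cs hz hd
    rcases List.mem_cons.mp hi with rfl | hi'
    · exact hs0
    · have hz' : π ω ∈ Subgroup.closure (cs.simple '' J) := by
        rw [← hcancel]; exact mul_mem hs0 hz
      have hred' : cs.IsReduced ω := by
        simpa using hred.drop 1
      exact ih hred' hz' i hi'

lemma support_subset_of_mem {J : Set B} {z : W}
    (hz : z ∈ Subgroup.closure (cs.simple '' J)) :
    cs.support z ⊆ {i | s i ∈ Subgroup.closure (cs.simple '' J)} := by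
  rintro i ⟨ω, hred, hπ, hi⟩
  exact support_closure cs ω hred (by rw [hπ]; exact hz) i hi

lemma mem_closure_of_support {J : Set B} {z : W} (h : cs.support z ⊆ J) :
    z ∈ Subgroup.closure (cs.simple '' J) := by
  obtain ⟨ω, hred, rfl⟩ := cs.exists_reduced_word' z
  exact wordProd_mem cs (fun i hi => h ⟨ω, hred, rfl, hi⟩)

lemma coset_mul {J : Set B} {u w : W} (hu : u ∈ Subgroup.closure (cs.simple '' J)) :
    cs.coset J (u * w) = cs.coset J w := by
  unfold CoxeterSystem.coset
  ext g
  constructor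
  · rintro ⟨h, hh, rfl⟩
    have hh' : h ∈ Subgroup.closure (cs.simple '' J) := hh
    exact ⟨h * u, mul_mem hh' hu, by dsimp; rw [mul_assoc]⟩
  · rintro ⟨h, hh, rfl⟩
    have hh' : h ∈ Subgroup.closure (cs.simple '' J) := hh
    refine ⟨h * u⁻¹, mul_mem hh' (inv_mem hu), ?_⟩
    dsimp
    rw [mul_assoc, ← mul_assoc u⁻¹, inv_mul_cancel, one_mul]

lemma closure_eq_K {J : Set B} :
    Subgroup.closure (cs.simple '' {i | s i ∈ Subgroup.closure (cs.simple '' J)})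
      = Subgroup.closure (cs.simple '' J) := by
  apply _root_.le_antisymm
  · rw [Subgroup.closure_le]
    rintro x ⟨i, hi, rfl⟩
    exact hi
  · apply Subgroup.closure_mono
    apply Set.image_mono
    intro i hi
    exact Subgroup.subset_closure ⟨i, hi, rfl⟩

end Stmt6Aux

/-- In the Coxeter complex model of the reflection arrangement of a finite Coxeter group `W`
(where faces are the cosets `W_J x`, the closure of the chamber `C_x` consists of the faces
`W_J x` for `J ⊆ S`, the hyperplane `H_t` consists of the faces `W_J w` with
`support (w t w⁻¹) ⊆ J`, and the closure of the face `W_J x` consists of the faces `W_K x` for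
`J ⊆ K`): the intersection of the closed chamber `C_x` with `H_t` is the closed face
corresponding to the coset `W_{J(x t x⁻¹)} x`. -/
theorem statement6 (cs : CoxeterSystem M W) [Finite W] (x t : W)
    (ht : cs.IsReflection t) :
    {F : Set W | ∃ J : Set B, F = cs.coset J x} ∩
      {F : Set W | ∃ (J : Set B) (w : W), F = cs.coset J w ∧ cs.support (w * t * w⁻¹) ⊆ J}
    = {F : Set W | ∃ K : Set B, cs.support (x * t * x⁻¹) ⊆ K ∧ F = cs.coset K x} := by
  ext F
  simp only [Set.mem_inter_iff, Set.mem_setOf_eq]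
  constructor
  · rintro ⟨⟨J, rfl⟩, J', w, hF, hsupp⟩
    have hx : x ∈ cs.coset J' w := by
      rw [← hF]
      exact ⟨1, SetLike.mem_coe.mpr (one_mem _), one_mul x⟩
    obtain ⟨u, hu, hux⟩ := hx
    have hu' : u ∈ Subgroup.closure (cs.simple '' J') := hu
    refine ⟨{i | cs.simple i ∈ Subgroup.closure (cs.simple '' J')}, ?_, ?_⟩
    · have hwt : w * t * w⁻¹ ∈ Subgroup.closure (cs.simple '' J') :=
        Stmt6Aux.mem_closure_of_support cs hsupp
      have hxt : x * t * x⁻¹ ∈ Subgroup.closure (cs.simple '' J') := by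
        rw [← hux, show u * w * t * (u * w)⁻¹ = u * (w * t * w⁻¹) * u⁻¹ by group]
        exact mul_mem (mul_mem hu' hwt) (inv_mem hu')
      exact Stmt6Aux.support_subset_of_mem cs hxt
    · have h1 : cs.coset J' x = cs.coset J' w := by
        rw [← hux]; exact Stmt6Aux.coset_mul cs hu'
      have h2 : cs.coset {i | cs.simple i ∈ Subgroup.closure (cs.simple '' J')} x
          = cs.coset J' x := by
        unfold CoxeterSystem.coset
        rw [Stmt6Aux.closure_eq_K]
      rw [hF, ← h1, ← h2]
  · rintro ⟨K, hs, rfl⟩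
    exact ⟨⟨K, rfl⟩, K, x, rfl, hs⟩
end

section
/- Let W be a finite Coxeter group, J an irreducible subset of S, and t a reflection of W_J with full support J. Then the set {x ∈ N_W(W_J) : J(x t x^{-1}) = J} equals the product set X(S,J)·W_J(t), where X(S,J) = {x ∈ X_J : J^x = J} is the set of minimal double coset representatives normalizing J and W_J(t) = {x ∈ W_J : J(x t x^{-1}) = J}. -/
open CoxeterSystem Pointwise

variable {B W : Type*} [Group W] {M : CoxeterMatrix B}

/-- Irreducibility of the standard parabolic subgroup `W_J`, expressed via the Coxeter matrix. -/
def CoxeterMatrix.IsIrreducibleOn (M : CoxeterMatrix B) (J : Set B) : Prop :=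
  J.Nonempty ∧ ¬ ∃ S₁ S₂ : Set B, S₁.Nonempty ∧ S₂.Nonempty ∧ Disjoint S₁ S₂ ∧
    S₁ ∪ S₂ = J ∧ ∀ i ∈ S₁, ∀ j ∈ S₂, M i j = 2

/-- The standard parabolic subgroup `W_J`. -/
def CoxeterSystem.parabolic (cs : CoxeterSystem M W) (J : Set B) : Subgroup W :=
  Subgroup.closure (cs.simple '' J)

/-- `X_J`: the set of minimal length coset representatives of `W_J \ W`. -/
def CoxeterSystem.minReps (cs : CoxeterSystem M W) (J : Set B) : Set W :=
  {x : W | ∀ y ∈ cs.parabolic J, cs.length x ≤ cs.length (y * x)}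

/-- `X(S,J) = {x ∈ X_J ∩ X_J⁻¹ | J^x = J}`: the minimal double coset representatives
normalizing `J`. -/
def CoxeterSystem.XSJ (cs : CoxeterSystem M W) (J : Set B) : Set W :=
  {x ∈ cs.minReps J | x⁻¹ ∈ cs.minReps J ∧
    (fun s => x⁻¹ * s * x) '' (cs.simple '' J) = cs.simple '' J}

namespace StrongExchangeAux

variable {B W : Type*} [Group W] [DecidableEq W] {M : CoxeterMatrix B} (cs : CoxeterSystem M W)

local prefix:100 "s" => cs.simple
local prefix:100 "π" => cs.wordProd
local prefix:100 "ℓ" => cs.length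
local prefix:100 "ris" => cs.rightInvSeq
local prefix:100 "lis" => cs.leftInvSeq

/-- the basic sign-flip function -/
def pf (i : B) : W × ℤˣ → W × ℤˣ :=
  fun p => (s i * p.1 * s i, if p.1 = s i then -p.2 else p.2)

lemma pf_invol (i : B) : Function.Involutive (pf cs i) := by
  intro p
  unfold pf
  by_cases h : p.1 = s i
  · simp only [h, if_pos rfl, cs.simple_mul_simple_self, one_mul,
      cs.simple_mul_simple_cancel_right]
    simp [← h]
  · have h2 : ¬ (s i * p.1 * s i = s i) := by
      intro hc
      apply h
      have := congrArg (fun x => s i * x * s i) hc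
      simp only [← mul_assoc] at this
      simpa [cs.simple_mul_simple_self, cs.simple_mul_simple_cancel_right] using this
    simp only [if_neg h, if_neg h2]
    simp only [← mul_assoc, cs.simple_mul_simple_self, one_mul]
    simp [mul_assoc, cs.simple_mul_simple_self]

/-- the permutation for a single generator -/
def pfPerm (i : B) : Equiv.Perm (W × ℤˣ) := (pf_invol cs i).toPerm

lemma pfPerm_apply (i : B) (p : W × ℤˣ) :
    pfPerm cs i p = (s i * p.1 * s i, if p.1 = s i then -p.2 else p.2) := rfl

/-- composition over a word -/
lemma prod_map_pfPerm (ω : List B) (t : W) (ε : ℤˣ) :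
    (ω.map (pfPerm cs)).prod (t, ε) =
      (π ω * t * (π ω)⁻¹, (-1) ^ ((ris ω).count t) * ε) := by
  induction ω with
  | nil => simp
  | cons i ω ih =>
    rw [List.map_cons, List.prod_cons, Equiv.Perm.mul_apply, ih, pfPerm_apply]
    have hris : ris (i :: ω) = (π ω)⁻¹ * (s i) * (π ω) :: ris ω := rfl
    rw [hris, cs.wordProd_cons, List.count_cons]
    have hiff : (π ω * t * (π ω)⁻¹ = s i) ↔ ((π ω)⁻¹ * s i * π ω == t) = true := by
      rw [beq_iff_eq]
      constructor
      · intro h; rw [← h]; group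
      · intro h; rw [← h]; group
    refine Prod.ext ?_ ?_
    · show s i * (π ω * t * (π ω)⁻¹) * s i = s i * π ω * t * (s i * π ω)⁻¹
      rw [mul_inv_rev, cs.inv_simple]
      group
    · show (if π ω * t * (π ω)⁻¹ = s i then -((-1) ^ ((ris ω).count t) * ε)
          else (-1) ^ ((ris ω).count t) * ε) =
        (-1) ^ ((ris ω).count t + if (π ω)⁻¹ * s i * π ω == t then 1 else 0) * ε
      by_cases h : π ω * t * (π ω)⁻¹ = s i
      · rw [if_pos h, if_pos (hiff.mp h), pow_succ]
        rw [mul_assoc, neg_one_mul, ← mul_neg]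
      · rw [if_neg h, if_neg (fun hc => h (hiff.mpr hc)), add_zero]

end StrongExchangeAux

namespace P2
open StrongExchangeAux
variable {B W : Type*} [Group W] [DecidableEq W] {M : CoxeterMatrix B} (cs : CoxeterSystem M W)

local prefix:100 "s" => cs.simple
local prefix:100 "π" => cs.wordProd
local prefix:100 "ℓ" => cs.length
local prefix:100 "ris" => cs.rightInvSeq
local prefix:100 "lis" => cs.leftInvSeq

lemma conj_prod_alt (i j : B) (n : ℕ) :
    (π (alternatingWord i j n))⁻¹ * s (if Even n then j else i) * π (alternatingWord i j n)
      = π (alternatingWord i j (2*n+1)) := by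
  have key : ∀ p : ℕ, (s j * (s i * s j) ^ p) = (s j * s i)^p * s j := by
    intro p
    have hs : SemiconjBy (s j) (s i * s j) (s j * s i) := by
      unfold SemiconjBy; group
    exact (hs.pow_right p).eq
  have hinv : ∀ p : ℕ, ((s i * s j) ^ p)⁻¹ = (s j * s i) ^ p := by
    intro p
    rw [← inv_pow, mul_inv_rev, cs.inv_simple, cs.inv_simple]
  rcases Nat.even_or_odd n with he | ho
  · obtain ⟨p, rfl⟩ := he
    rw [cs.prod_alternatingWord_eq_mul_pow, cs.prod_alternatingWord_eq_mul_pow]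
    have h1 : Even (p + p) := ⟨p, rfl⟩
    have h2 : ¬ Even (2*(p+p)+1) := by simp [Nat.even_add_one, Nat.even_mul]
    rw [if_pos h1, if_pos h1, if_neg h2]
    have e1 : (p+p)/2 = p := by omega
    have e2 : (2*(p+p)+1)/2 = p + p := by omega
    rw [e1, e2, one_mul, hinv, ← key, mul_assoc, ← pow_add]
  · obtain ⟨p, rfl⟩ := ho
    rw [cs.prod_alternatingWord_eq_mul_pow, cs.prod_alternatingWord_eq_mul_pow]
    have h1 : ¬ Even (2*p+1) := by simp [Nat.even_add_one, Nat.even_mul]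
    have h2 : ¬ Even (2*(2*p+1)+1) := by simp [Nat.even_add_one, Nat.even_mul]
    rw [if_neg h1, if_neg h1, if_neg h2]
    have e1 : (2*p+1)/2 = p := by omega
    have e2 : (2*(2*p+1)+1)/2 = 2*p+1 := by omega
    rw [e1, e2, mul_inv_rev, hinv, cs.inv_simple, key (2*p+1), key p]
    rw [show (s j * s i) ^ p * s j * s i = (s j * s i) ^ (p+1) from by
      rw [mul_assoc, ← pow_succ]]
    rw [← mul_assoc, ← pow_add, show p+1+p = 2*p+1 by omega]

lemma getD_ris_alt (i j : B) (n : ℕ) (k : ℕ) (hk : k < n) :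
    (ris (alternatingWord i j n)).getD k 1 = π (alternatingWord i j (2*(n-k)-1)) := by
  induction n generalizing k with
  | zero => omega
  | succ n ih =>
    rw [alternatingWord_succ']
    have hris : ris ((if Even n then j else i) :: alternatingWord i j n)
        = (π (alternatingWord i j n))⁻¹ * s (if Even n then j else i)
            * π (alternatingWord i j n) :: ris (alternatingWord i j n) := rfl
    rw [hris]
    rcases k with _ | k
    · rw [List.getD_cons_zero, conj_prod_alt]
      have e : 2 * (n + 1 - 0) - 1 = 2*n+1 := by omega
      rw [e]
    · rw [List.getD_cons_succ, ih k (by omega)]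
      have e : 2 * (n + 1 - (k+1)) - 1 = 2*(n-k)-1 := by omega
      rw [e]

lemma prod_alt_add_two_mul (i j : B) (q m : ℕ) (h : (s i * s j) ^ m = 1) :
    π (alternatingWord i j (q + 2*m)) = π (alternatingWord i j q) := by
  rw [cs.prod_alternatingWord_eq_mul_pow, cs.prod_alternatingWord_eq_mul_pow]
  have h1 : Even (q + 2*m) ↔ Even q := by simp [Nat.even_add, Nat.even_mul]
  have h2 : (q + 2*m)/2 = q/2 + m := by omega
  rw [h2, pow_add, h, mul_one]
  by_cases he : Even q
  · rw [if_pos (h1.mpr he), if_pos he]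
  · rw [if_neg (fun hc => he (h1.mp hc)), if_neg he]

lemma liftable : M.IsLiftable (pfPerm cs (W := W)) := by
  intro i j
  rcases Nat.eq_zero_or_pos (M i j) with h0 | hpos
  · rw [h0, pow_zero]
  · set m := M i j with hm
    have hrel : (s i * s j) ^ m = 1 := cs.simple_mul_simple_pow i j
    have hprod : ∀ p : ℕ, (pfPerm cs i * pfPerm cs j) ^ p
        = ((alternatingWord i j (2*p)).map (pfPerm cs)).prod := by
      intro p
      induction p with
      | zero => simp [alternatingWord]
      | succ p ih =>
        have : alternatingWord i j (2*(p+1)) = i :: j :: alternatingWord i j (2*p) := by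
          rw [show 2*(p+1) = (2*p+1)+1 by omega, alternatingWord_succ',
            alternatingWord_succ']
          have h1 : ¬ Even (2*p+1) := by simp [Nat.even_add_one, Nat.even_mul]
          have h2 : Even (2*p) := by simp [Nat.even_mul]
          rw [if_neg h1, if_pos h2]
        rw [this, List.map_cons, List.map_cons, List.prod_cons, List.prod_cons, ← ih,
          pow_succ']
        rw [mul_assoc]
    rw [hprod m]
    have hone : π (alternatingWord i j (2*m)) = 1 := by
      rw [cs.prod_alternatingWord_eq_mul_pow]
      have hev : Even (2*m) := by simp [Nat.even_mul]
      rw [if_pos hev, one_mul, show (2*m)/2 = m by omega, hrel]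
    have hlen : (ris (alternatingWord i j (2*m))).length = 2*m := by
      rw [cs.length_rightInvSeq, length_alternatingWord]
    set l := ris (alternatingWord i j (2*m)) with hl
    have hdt : l.drop m = l.take m := by
      apply List.ext_getElem
      · rw [List.length_drop, List.length_take]; omega
      · intro k h1 h2
        rw [List.getElem_drop, List.getElem_take]
        have hk : k < m := by rw [List.length_drop, hlen] at h1; omega
        rw [← List.getD_eq_getElem l 1, ← List.getD_eq_getElem l 1, hl,
          getD_ris_alt cs i j _ _ (by omega), getD_ris_alt cs i j _ _ (by omega)]
        have e1 : 2*(2*m - (m+k))-1 = 2*(m-k)-1 := by omega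
        have e2 : 2*(2*m - k)-1 = (2*(m-k)-1) + 2*m := by omega
        rw [e1, e2, prod_alt_add_two_mul cs i j _ _ hrel]
    apply Equiv.ext
    rintro ⟨t, ε⟩
    rw [prod_map_pfPerm, hone]
    have hcount : Even (l.count t) := by
      have hc : l.count t = (l.take m).count t + (l.drop m).count t := by
        conv_lhs => rw [← List.take_append_drop m l]
        rw [List.count_append]
      rw [hdt] at hc
      exact ⟨(l.take m).count t, hc⟩
    rw [← hl, Even.neg_one_pow hcount]
    simp

end P2


namespace P3
open StrongExchangeAux P2
variable {B W : Type*} [Group W] [DecidableEq W] {M : CoxeterMatrix B} (cs : CoxeterSystem M W)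

local prefix:100 "s" => cs.simple
local prefix:100 "π" => cs.wordProd
local prefix:100 "ℓ" => cs.length
local prefix:100 "ris" => cs.rightInvSeq
local prefix:100 "lis" => cs.leftInvSeq

/-- the sign homomorphism -/
noncomputable def phi : W →* Equiv.Perm (W × ℤˣ) := cs.lift ⟨pfPerm cs, liftable cs⟩

lemma phi_simple (i : B) : phi cs (s i) = pfPerm cs i := cs.lift_apply_simple (liftable cs) i

lemma phi_wordProd (ω : List B) : phi cs (π ω) = (ω.map (pfPerm cs)).prod := by
  unfold CoxeterSystem.wordProd
  rw [map_list_prod, List.map_map]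
  congr 1
  apply List.map_congr_left
  intro i _
  exact phi_simple cs i

lemma phi_apply_word (ω : List B) (t : W) (ε : ℤˣ) :
    phi cs (π ω) (t, ε) = (π ω * t * (π ω)⁻¹, (-1) ^ ((ris ω).count t) * ε) := by
  rw [phi_wordProd, prod_map_pfPerm]

lemma phi_eval (w t : W) (ε : ℤˣ) :
    phi cs w (t, ε) = (w * t * w⁻¹, ε * (phi cs w (t, 1)).2) := by
  obtain ⟨ω, _, rfl⟩ := cs.exists_reduced_word' w
  rw [phi_apply_word, phi_apply_word]
  simp [mul_comm]

lemma eta_refl (t : W) (ht : cs.IsReflection t) : (phi cs t (t, 1)).2 = -1 := by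
  obtain ⟨p, c, rfl⟩ := ht
  set t := p * s c * p⁻¹ with hdef
  have h1 : phi cs p⁻¹ (t, 1) = (s c, (phi cs p⁻¹ (t, 1)).2) := by
    rw [phi_eval]
    have he : p⁻¹ * t * p⁻¹⁻¹ = s c := by rw [hdef]; group
    rw [he, one_mul]
  have h2 : phi cs (s c) (s c, (phi cs p⁻¹ (t, 1)).2)
      = (s c, -(phi cs p⁻¹ (t, 1)).2) := by
    rw [phi_simple, pfPerm_apply]
    simp [cs.simple_mul_simple_cancel_left, cs.simple_mul_simple_self]
  have h3 : phi cs p (s c, -(phi cs p⁻¹ (t, 1)).2)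
      = (t, -(phi cs p⁻¹ (t, 1)).2 * (phi cs p (s c, 1)).2) := by
    rw [phi_eval]
  have hab : (phi cs p⁻¹ (t, 1)).2 * (phi cs p (s c, 1)).2 = 1 := by
    have : phi cs p (phi cs p⁻¹ (t, 1)) = (t, 1) := by
      rw [← Equiv.Perm.mul_apply, ← map_mul]
      simp
    rw [h1, phi_eval] at this
    have := congrArg Prod.snd this
    simpa [mul_comm] using this
  have hc : phi cs t = phi cs p * phi cs (s c) * phi cs p⁻¹ := by
    rw [hdef, map_mul, map_mul]
  rw [hc, Equiv.Perm.mul_apply, Equiv.Perm.mul_apply, h1, h2, h3]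
  have : -(phi cs p⁻¹ (t, 1)).2 * (phi cs p (s c, 1)).2
      = -((phi cs p⁻¹ (t, 1)).2 * (phi cs p (s c, 1)).2) := neg_mul _ _
  rw [this, hab]

/-- Strong exchange, membership form, right version. -/
lemma mem_rightInvSeq_of_isRightInversion {ω : List B} (hω : cs.IsReduced ω) {t : W}
    (ht : cs.IsReflection t) (hlt : ℓ (π ω * t) < ℓ (π ω)) : t ∈ ris ω := by
  set w := π ω with hw
  set v := w * t with hv
  have hvt : v * t = w := by
    rw [hv, mul_assoc, ht.mul_self, mul_one]
  -- Step 1 : sign of v at t is 1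
  have step1 : (phi cs v (t, 1)).2 = 1 := by
    obtain ⟨α, hα, hvα⟩ := cs.exists_reduced_word' v
    rw [hvα, phi_apply_word]
    have hzero : (ris α).count t = 0 := by
      by_contra h
      have hmem : t ∈ ris α := List.count_pos_iff.mp (Nat.pos_of_ne_zero h)
      have := (cs.isRightInversion_of_mem_rightInvSeq hα hmem).2
      rw [← hvα] at this
      rw [hvt] at this
      omega
    rw [hzero, pow_zero, one_mul]
  -- Step 2 : sign of w at t is -1
  have step2 : (phi cs w (t, 1)).2 = -1 := by
    rw [← hvt, map_mul, Equiv.Perm.mul_apply]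
    have htt : phi cs t (t, 1) = (t, -1) := by
      rw [phi_eval, eta_refl cs t ht, ht.mul_self]
      simp [ht.inv]
    rw [htt, phi_eval, step1]
    simp
  -- Step 3 : conclude
  rw [hw, phi_apply_word] at step2
  have hodd : (ris ω).count t ≠ 0 := by
    intro h
    rw [h, pow_zero, one_mul] at step2
    exact absurd (congrArg Units.val step2) (by norm_num)
  exact List.count_pos_iff.mp (Nat.pos_of_ne_zero hodd)

/-- Strong exchange, membership form, left version. -/
lemma mem_leftInvSeq_of_isLeftInversion {ω : List B} (hω : cs.IsReduced ω) {t : W}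
    (ht : cs.IsReflection t) (hlt : ℓ (t * π ω) < ℓ (π ω)) : t ∈ lis ω := by
  have hrev : cs.IsReduced ω.reverse := (cs.isReduced_reverse_iff ω).mpr hω
  have h1 : ℓ (π ω.reverse * t) < ℓ (π ω.reverse) := by
    rw [cs.wordProd_reverse]
    have e1 : ℓ ((π ω)⁻¹ * t) = ℓ (t * π ω) := by
      rw [← cs.length_inv ((π ω)⁻¹ * t)]
      congr 1
      rw [mul_inv_rev, ht.inv, inv_inv]
    have e2 : ℓ ((π ω)⁻¹) = ℓ (π ω) := cs.length_inv _
    omega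
  have := mem_rightInvSeq_of_isRightInversion cs hrev ht h1
  rw [cs.rightInvSeq_reverse] at this
  exact List.mem_reverse.mp this

/-- The exchange equation. -/
lemma exists_eraseIdx_of_isLeftInversion {ω : List B} (hω : cs.IsReduced ω) {t : W}
    (ht : cs.IsReflection t) (hlt : ℓ (t * π ω) < ℓ (π ω)) :
    ∃ k < ω.length, t * π ω = π (ω.eraseIdx k) := by
  have hmem := mem_leftInvSeq_of_isLeftInversion cs hω ht hlt
  obtain ⟨⟨k, hk⟩, hget⟩ := List.mem_iff_get.mp hmem
  rw [cs.length_leftInvSeq] at hk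
  refine ⟨k, hk, ?_⟩
  have : (lis ω).getD k 1 = t := by
    rw [List.getD_eq_getElem _ _ (by rw [cs.length_leftInvSeq]; exact hk)]
    rw [← hget, List.get_eq_getElem]
  rw [← this, cs.getD_leftInvSeq_mul_wordProd]

end P3


namespace P4
open StrongExchangeAux P2 P3
variable {B W : Type*} [Group W] [DecidableEq W] {M : CoxeterMatrix B} (cs : CoxeterSystem M W)
  (J : Set B)

local prefix:100 "s" => cs.simple
local prefix:100 "π" => cs.wordProd
local prefix:100 "ℓ" => cs.length
local prefix:100 "ris" => cs.rightInvSeq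
local prefix:100 "lis" => cs.leftInvSeq

/-- right-handed exchange equation -/
lemma exists_eraseIdx_of_isRightInversion {ω : List B} (hω : cs.IsReduced ω) {t : W}
    (ht : cs.IsReflection t) (hlt : ℓ (π ω * t) < ℓ (π ω)) :
    ∃ k < ω.length, π ω * t = π (ω.eraseIdx k) := by
  have hmem := mem_rightInvSeq_of_isRightInversion cs hω ht hlt
  obtain ⟨⟨k, hk⟩, hget⟩ := List.mem_iff_get.mp hmem
  rw [cs.length_rightInvSeq] at hk
  refine ⟨k, hk, ?_⟩
  have : (ris ω).getD k 1 = t := by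
    rw [List.getD_eq_getElem _ _ (by rw [cs.length_rightInvSeq]; exact hk)]
    rw [← hget, List.get_eq_getElem]
  rw [← this, cs.wordProd_mul_getD_rightInvSeq]

/-- words for parabolic elements -/
lemma mem_parabolic_iff (w : W) :
    w ∈ cs.parabolic J ↔ ∃ ω : List B, (∀ i ∈ ω, i ∈ J) ∧ w = π ω := by
  constructor
  · intro hw
    induction hw using Subgroup.closure_induction with
    | mem x hx =>
      obtain ⟨i, hi, rfl⟩ := hx
      exact ⟨[i], by simpa using hi, by simp⟩
    | one => exact ⟨[], by simp, by simp⟩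
    | mul x y _ _ hx hy =>
      obtain ⟨ω₁, h1, rfl⟩ := hx
      obtain ⟨ω₂, h2, rfl⟩ := hy
      exact ⟨ω₁ ++ ω₂, by
        intro i hi
        rcases List.mem_append.mp hi with h | h
        exacts [h1 i h, h2 i h], (cs.wordProd_append ω₁ ω₂).symm⟩
    | inv x _ hx =>
      obtain ⟨ω, h1, rfl⟩ := hx
      exact ⟨ω.reverse, fun i hi => h1 i (List.mem_reverse.mp hi),
        (cs.wordProd_reverse ω).symm⟩
  · rintro ⟨ω, hJ, rfl⟩
    induction ω with
    | nil => simp [Subgroup.one_mem]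
    | cons i ω ih =>
      rw [cs.wordProd_cons]
      exact Subgroup.mul_mem _
        (Subgroup.subset_closure ⟨i, hJ i (List.mem_cons_self), rfl⟩)
        (ih (fun b hb => hJ b (List.mem_cons_of_mem i hb)))

/-- deletion property -/
lemma exists_reduced_subword (ω : List B) :
    ∃ ω' : List B, cs.IsReduced ω' ∧ π ω' = π ω ∧ ∀ i ∈ ω', i ∈ ω := by
  generalize hn : ω.length = n
  induction n using Nat.strong_induction_on generalizing ω with
  | _ n ih =>
  classical
  subst hn
  by_cases hred : cs.IsReduced ω
  · exact ⟨ω, hred, rfl, fun _ h => h⟩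
  · have hex : ∃ m, ¬ cs.IsReduced (ω.take m) := ⟨ω.length, by rwa [List.take_length]⟩
    set k0 := Nat.find hex with hk0
    have hk0spec : ¬ cs.IsReduced (ω.take k0) := Nat.find_spec hex
    have hk0pos : 0 < k0 := by
      rcases Nat.eq_zero_or_pos k0 with h | h
      · exfalso; apply hk0spec; rw [h]; simp [CoxeterSystem.IsReduced]
      · exact h
    set k := k0 - 1 with hk
    have hkred : cs.IsReduced (ω.take k) := by
      by_contra h
      have := Nat.find_min hex (show k < k0 by omega)
      exact this h
    have hk0len : k0 ≤ ω.length := Nat.find_min' hex (by rwa [List.take_length])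
    have hklt : k < ω.length := by omega
    have hk0k : k0 = k + 1 := by omega
    set c := ω[k] with hc
    have htake : ω.take (k+1) = ω.take k ++ [c] := by
      rw [List.take_succ, List.getElem?_eq_getElem hklt]
      rfl
    have hlenk : ℓ (π (ω.take k)) = k := by
      have := hkred
      rwa [CoxeterSystem.IsReduced, List.length_take, min_eq_left (by omega)] at this
    have hne : ℓ (π (ω.take k) * s c) ≠ k + 1 := by
      intro h
      apply hk0spec
      rw [hk0k, CoxeterSystem.IsReduced, htake, cs.wordProd_append, cs.wordProd_singleton, h]
      rw [List.length_append, List.length_take, min_eq_left (by omega)]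
      rfl
    have hlt : ℓ (π (ω.take k) * s c) < ℓ (π (ω.take k)) := by
      rcases cs.length_mul_simple (π (ω.take k)) c with h | h
      · exact absurd (by rw [h, hlenk]) hne
      · omega
    obtain ⟨q, hq, hqe⟩ := exists_eraseIdx_of_isRightInversion cs hkred
      (cs.isReflection_simple c) hlt
    set ω'' := (ω.take k).eraseIdx q ++ ω.drop (k+1) with hω''
    have hprod : π ω'' = π ω := by
      rw [hω'', cs.wordProd_append, ← hqe]
      conv_rhs => rw [← List.take_append_drop (k+1) ω]
      rw [cs.wordProd_append, htake, cs.wordProd_append, cs.wordProd_singleton]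
    have hlen'' : ω''.length < ω.length := by
      rw [hω'', List.length_append, List.length_eraseIdx, List.length_drop]
      rw [List.length_take] at hq ⊢
      simp only [if_pos hq]
      omega
    have hsub : ∀ i ∈ ω'', i ∈ ω := by
      intro i hi
      rcases List.mem_append.mp hi with h | h
      · exact ((List.eraseIdx_sublist (ω.take k) q).trans (List.take_sublist k ω)).mem h
      · exact (List.drop_sublist (k+1) ω).mem h
    obtain ⟨ω', h1, h2, h3⟩ := ih ω''.length hlen'' ω'' rfl
    exact ⟨ω', h1, by rw [h2, hprod], fun i hi => hsub i (h3 i hi)⟩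

end P4

namespace P4
variable {B W : Type*} [Group W] [DecidableEq W] {M : CoxeterMatrix B} (cs : CoxeterSystem M W)
  (J : Set B)

local prefix:100 "s" => cs.simple
local prefix:100 "π" => cs.wordProd
local prefix:100 "ℓ" => cs.length
local prefix:100 "ris" => cs.rightInvSeq
local prefix:100 "lis" => cs.leftInvSeq

/-- every parabolic element has a reduced word with letters in J -/
lemma exists_reduced_word_subset {w : W} (hw : w ∈ cs.parabolic J) :
    ∃ ω : List B, cs.IsReduced ω ∧ π ω = w ∧ ∀ i ∈ ω, i ∈ J := by
  obtain ⟨ω, hJω, rfl⟩ := (mem_parabolic_iff cs J w).mp hw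
  obtain ⟨ω', h1, h2, h3⟩ := exists_reduced_subword cs ω
  exact ⟨ω', h1, h2, fun i hi => hJω i (h3 i hi)⟩

/-- a length-one parabolic element is a simple reflection with index in J -/
lemma simple_image_of_mem_parabolic {w : W} (hw : w ∈ cs.parabolic J) (hl : ℓ w = 1) :
    w ∈ cs.simple '' J := by
  obtain ⟨ω, h1, h2, h3⟩ := exists_reduced_word_subset cs J hw
  have hlen : ω.length = 1 := by
    rw [CoxeterSystem.IsReduced] at h1
    rw [h2] at h1
    omega
  obtain ⟨i, rfl⟩ := List.length_eq_one_iff.mp hlen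
  exact ⟨i, h3 i (by simp), by rw [← h2, cs.wordProd_singleton]⟩

/-- Fact C: every letter of every reduced word of a parabolic element is
(a duplicate of) a simple reflection of J -/
lemma simple_mem_image_of_mem_reduced {w : W} (hw : w ∈ cs.parabolic J)
    {ω : List B} (hred : cs.IsReduced ω) (hprod : π ω = w) :
    ∀ i ∈ ω, s i ∈ cs.simple '' J := by
  generalize hn : ω.length = n
  induction n generalizing ω w with
  | zero =>
    intro i hi
    rw [List.length_eq_zero_iff.mp hn] at hi
    simp at hi
  | succ n ih =>
    obtain ⟨c, α, rfl⟩ : ∃ c α, ω = c :: α := by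
      cases ω with
      | nil => simp at hn
      | cons c α => exact ⟨c, α, rfl⟩
    have hα : cs.IsReduced α := by
      have := CoxeterSystem.IsReduced.drop (j := 1) hred
      simpa using this
    have hαn : α.length = n := by simpa using hn
    have hword : π (c :: α) = s c * π α := cs.wordProd_cons c α
    -- s c is a left inversion of w
    have hlw : ℓ w = n + 1 := by rw [← hprod, hred]; simpa using hn
    have hlα : ℓ (π α) = n := by rw [hα]; exact hαn
    have hdesc : ℓ (s c * w) < ℓ w := by
      have : s c * w = π α := by
        rw [← hprod, hword, ← mul_assoc, cs.simple_mul_simple_self, one_mul]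
      rw [this]; omega
    -- s c lies in the parabolic
    have hscP : s c ∈ cs.parabolic J := by
      obtain ⟨κ, hκred, hκprod, hκJ⟩ := exists_reduced_word_subset cs J hw
      have hmem : s c ∈ lis κ := by
        apply P3.mem_leftInvSeq_of_isLeftInversion cs hκred (cs.isReflection_simple c)
        rw [hκprod]
        exact hdesc
      obtain ⟨⟨q, hq⟩, hget⟩ := List.mem_iff_get.mp hmem
      rw [cs.length_leftInvSeq] at hq
      have : (lis κ).getD q 1 = s c := by
        rw [List.getD_eq_getElem _ _ (by rw [cs.length_leftInvSeq]; exact hq), ← hget,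
          List.get_eq_getElem]
      rw [cs.getD_leftInvSeq, List.getElem?_eq_getElem hq] at this
      rw [← this]
      have h1 : π (κ.take q) ∈ cs.parabolic J := by
        rw [mem_parabolic_iff]
        exact ⟨κ.take q, fun i hi => hκJ i ((List.take_sublist q κ).mem hi), rfl⟩
      have h2 : s κ[q] ∈ cs.parabolic J :=
        Subgroup.subset_closure ⟨κ[q], hκJ κ[q] (List.getElem_mem hq), rfl⟩
      simp only [Option.map_some, Option.getD_some]
      exact Subgroup.mul_mem _ (Subgroup.mul_mem _ h1 h2) (Subgroup.inv_mem _ h1)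
    intro i hi
    rcases List.mem_cons.mp hi with rfl | hi'
    · exact simple_image_of_mem_parabolic cs J hscP (cs.length_simple i)
    · have hP' : π α ∈ cs.parabolic J := by
        have : π α = s c * w := by
          rw [← hprod, hword, ← mul_assoc, cs.simple_mul_simple_self, one_mul]
        rw [this]
        exact Subgroup.mul_mem _ hscP hw
      exact ih hP' hα rfl hαn i hi'

end P4

namespace P5
open P4
variable {B W : Type*} [Group W] [DecidableEq W] [DecidableEq B] {M : CoxeterMatrix B} (cs : CoxeterSystem M W)
  (J : Set B)

local prefix:100 "s" => cs.simple
local prefix:100 "π" => cs.wordProd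
local prefix:100 "ℓ" => cs.length

/-- wordProd unchanged under letterwise substitution with equal simples -/
lemma wordProd_map_eq (f : B → B) (ω : List B) (h : ∀ b ∈ ω, s (f b) = s b) :
    π (ω.map f) = π ω := by
  induction ω with
  | nil => simp
  | cons c ω ih =>
    rw [List.map_cons, cs.wordProd_cons, cs.wordProd_cons, h c (by simp),
      ih (fun b hb => h b (List.mem_cons_of_mem c hb))]

/-- support is closed under equality of simple reflections -/
lemma mem_support_of_simple_eq {w : W} {i j : B} (hij : s i = s j)
    (hj : j ∈ cs.support w) : i ∈ cs.support w := by
  obtain ⟨ω, hred, hprod, hmem⟩ := hj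
  refine ⟨ω.map (fun b => if b = j then i else b), ?_, ?_, ?_⟩
  · have : π (ω.map (fun b => if b = j then i else b)) = π ω := by
      apply wordProd_map_eq
      intro b hb
      by_cases hbj : b = j
      · rw [if_pos hbj, hbj, hij]
      · rw [if_neg hbj]
    rw [CoxeterSystem.IsReduced, this, List.length_map]
    exact hred
  · rw [wordProd_map_eq]
    · exact hprod
    intro b hb
    by_cases hbj : b = j
    · rw [if_pos hbj, hbj, hij]
    · rw [if_neg hbj]
  · exact List.mem_map.mpr ⟨j, hmem, by simp⟩

/-- letters of reduced words are in the support -/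
lemma letter_mem_support {w : W} {ω : List B} (hred : cs.IsReduced ω) (hprod : π ω = w)
    {i : B} (hi : i ∈ ω) : i ∈ cs.support w := ⟨ω, hred, hprod, hi⟩

/-- support of a parabolic element, under saturation of J -/
lemma support_subset_of_mem_parabolic (hsat : ∀ c j, j ∈ J → s c = s j → c ∈ J)
    {w : W} (hw : w ∈ cs.parabolic J) : cs.support w ⊆ J := by
  intro i hi
  obtain ⟨ω, hred, hprod, hmem⟩ := hi
  obtain ⟨j, hj, hsij⟩ := simple_mem_image_of_mem_reduced cs J hw hred hprod i hmem
  exact hsat i j hj hsij.symm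

/-- an element whose support is contained in J is parabolic -/
lemma mem_parabolic_of_support_subset {w : W} (hw : cs.support w ⊆ J) :
    w ∈ cs.parabolic J := by
  obtain ⟨ω, hred, hprod⟩ := cs.exists_reduced_word' w
  rw [hprod, mem_parabolic_iff]
  exact ⟨ω, fun i hi => hw (letter_mem_support cs hred hprod.symm hi), rfl⟩

def minReps' (cs : CoxeterSystem M W) (J : Set B) : Set W :=
  {x : W | ∀ y ∈ cs.parabolic J, cs.length x ≤ cs.length (y * x)}

/-- length additivity for minimal coset representatives -/
lemma length_mul_of_minRep {z : W} (hz : z ∈ minReps' cs J) :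
    ∀ u ∈ cs.parabolic J, ℓ (u * z) = ℓ u + ℓ z := by
  intro u hu
  generalize hn : ℓ u = n
  induction n using Nat.strong_induction_on generalizing u with
  | _ n ih =>
  subst hn
  refine le_antisymm (cs.length_mul_le u z) ?_
  obtain ⟨κ, hκred, hκprod, hκJ⟩ := exists_reduced_word_subset cs J hu
  cases κ with
  | nil =>
    have : u = 1 := by rw [← hκprod]; simp
    simp [this]
  | cons c κ' =>
    have hu' : π κ' ∈ cs.parabolic J := by
      rw [mem_parabolic_iff]
      exact ⟨κ', fun i hi => hκJ i (List.mem_cons_of_mem c hi), rfl⟩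
    have hκ'red : cs.IsReduced κ' := by
      have := CoxeterSystem.IsReduced.drop (j := 1) hκred
      simpa using this
    have hlu : ℓ u = κ'.length + 1 := by
      rw [← hκprod, hκred]; simp
    have hlu' : ℓ (π κ') = κ'.length := hκ'red
    have ihu' : ℓ (π κ' * z) = ℓ (π κ') + ℓ z :=
      ih (ℓ (π κ')) (by omega) (π κ') hu' rfl
    have hsplit : u * z = s c * (π κ' * z) := by
      rw [← hκprod, cs.wordProd_cons, mul_assoc]
    rcases cs.length_simple_mul (π κ' * z) c with h | h
    · rw [hsplit, h, ihu']
      omega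
    · -- descent case: derive a contradiction
      exfalso
      obtain ⟨ζ, hζred, hζprod⟩ := cs.exists_reduced_word' z
      have hword : cs.IsReduced (κ' ++ ζ) := by
        rw [CoxeterSystem.IsReduced, cs.wordProd_append, ← hζprod, ihu', List.length_append]
        rw [hlu']
        have : ℓ z = ζ.length := by rw [hζprod]; exact hζred
        rw [this]
      have hlt : ℓ (s c * π (κ' ++ ζ)) < ℓ (π (κ' ++ ζ)) := by
        rw [cs.wordProd_append, ← hζprod]
        omega
      obtain ⟨k, hk, hke⟩ := P3.exists_eraseIdx_of_isLeftInversion cs hword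
        (cs.isReflection_simple c) hlt
      rw [List.length_append] at hk
      by_cases hcase : k < κ'.length
      · rw [List.eraseIdx_append_of_lt_length hcase] at hke
        rw [cs.wordProd_append, ← hζprod, cs.wordProd_append, ← hζprod, ← mul_assoc] at hke
        have hke' : s c * π κ' = π (κ'.eraseIdx k) := mul_right_cancel hke
        have h1 : ℓ (s c * π κ') ≤ κ'.length - 1 := by
          rw [hke']
          calc ℓ (π (κ'.eraseIdx k)) ≤ (κ'.eraseIdx k).length := cs.length_wordProd_le _
            _ ≤ κ'.length - 1 := by
                rw [List.length_eraseIdx, if_pos hcase]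
        have h2 : s c * π κ' = u := by rw [← hκprod, cs.wordProd_cons]
        rw [h2] at h1
        omega
      · push_neg at hcase
        rw [List.eraseIdx_append_of_length_le hcase] at hke
        rw [cs.wordProd_append, ← hζprod, cs.wordProd_append, ← mul_assoc] at hke
        set ztil := π (ζ.eraseIdx (k - κ'.length)) with hztil
        have hy : z = (π κ')⁻¹ * s c * π κ' * ztil := by
          have h2 : z = (s c * π κ')⁻¹ * (π κ' * ztil) := by rw [← hke]; group
          rw [h2, mul_inv_rev, cs.inv_simple]
          group
        have hyP : (π κ')⁻¹ * s c * π κ' ∈ cs.parabolic J := by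
          have hscP : s c ∈ cs.parabolic J :=
            Subgroup.subset_closure ⟨c, hκJ c (List.mem_cons_self), rfl⟩
          exact Subgroup.mul_mem _ (Subgroup.mul_mem _ (Subgroup.inv_mem _ hu') hscP) hu'
        have hmin := hz _ (Subgroup.inv_mem _ hyP)
        rw [show ((π κ')⁻¹ * s c * π κ')⁻¹ * z = ztil by rw [hy]; group] at hmin
        have : ℓ ztil ≤ ζ.length - 1 := by
          calc ℓ ztil ≤ (ζ.eraseIdx (k - κ'.length)).length := cs.length_wordProd_le _
            _ ≤ ζ.length - 1 := by
                rw [List.length_eraseIdx]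
                split <;> omega
        have hζlen : ℓ z = ζ.length := by rw [hζprod]; exact hζred
        have hzpos : 0 < ζ.length := by
          rcases Nat.eq_zero_or_pos ζ.length with h0 | h0
          · exfalso
            have : z = 1 := by
              rw [hζprod, List.length_eq_zero_iff.mp h0]; simp
            rw [this, mul_one] at h
            have := cs.length_simple_mul_ne (π κ') c
            omega
          · exact h0
        omega

/-- decomposition into parabolic part and minimal representative -/
lemma exists_decomp (x : W) :
    ∃ u ∈ cs.parabolic J, ∃ z ∈ minReps' cs J, x = u * z := by
  generalize hn : ℓ x = n
  induction n using Nat.strong_induction_on generalizing x with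
  | _ n ih =>
  subst hn
  by_cases hx : x ∈ minReps' cs J
  · exact ⟨1, Subgroup.one_mem _, x, hx, (one_mul x).symm⟩
  · rw [minReps', Set.mem_setOf_eq] at hx
    push_neg at hx
    obtain ⟨y, hyP, hylt⟩ := hx
    obtain ⟨u, huP, z, hz, he⟩ := ih (ℓ (y * x)) hylt (y * x) rfl
    refine ⟨y⁻¹ * u, Subgroup.mul_mem _ (Subgroup.inv_mem _ hyP) huP, z, hz, ?_⟩
    rw [mul_assoc, ← he]
    group

end P5

namespace P6
open P4 P5
variable {B W : Type*} [Group W] [DecidableEq W] [DecidableEq B] {M : CoxeterMatrix B}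
  (cs : CoxeterSystem M W) (J : Set B)

local prefix:100 "s" => cs.simple
local prefix:100 "π" => cs.wordProd
local prefix:100 "ℓ" => cs.length

lemma inv_mem_minReps {z : W} (hz : z ∈ minReps' cs J)
    (hzN : z ∈ Subgroup.normalizer (cs.parabolic J : Set W)) : z⁻¹ ∈ minReps' cs J := by
  intro y hy
  have h1 : ℓ (y * z⁻¹) = ℓ (z * y⁻¹) := by
    rw [← cs.length_inv (y * z⁻¹), mul_inv_rev, inv_inv]
  have h2 : z * y⁻¹ = (z * y⁻¹ * z⁻¹) * z := by group
  have h3 : z * y⁻¹ * z⁻¹ ∈ cs.parabolic J :=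
    (Subgroup.mem_normalizer_iff.mp hzN y⁻¹).mp (Subgroup.inv_mem _ hy)
  calc ℓ z⁻¹ = ℓ z := cs.length_inv z
    _ ≤ ℓ ((z * y⁻¹ * z⁻¹) * z) := hz _ h3
    _ = ℓ (y * z⁻¹) := by rw [← h2, ← h1]

lemma conj_simple_mem {z : W} (hz : z ∈ minReps' cs J) (hzi : z⁻¹ ∈ minReps' cs J)
    (hzN : z ∈ Subgroup.normalizer (cs.parabolic J : Set W)) {j : B} (hj : j ∈ J) :
    z⁻¹ * s j * z ∈ cs.simple '' J := by
  set v := z⁻¹ * s j * z with hv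
  have hsjP : s j ∈ cs.parabolic J := Subgroup.subset_closure ⟨j, hj, rfl⟩
  have hvP : v ∈ cs.parabolic J := by
    have := (Subgroup.mem_normalizer_iff.mp hzN v).mpr
    apply this
    have : z * v * z⁻¹ = s j := by rw [hv]; group
    rw [this]
    exact hsjP
  have hvinvP : v⁻¹ ∈ cs.parabolic J := Subgroup.inv_mem _ hvP
  have hadd : ℓ (v⁻¹ * z⁻¹) = ℓ v⁻¹ + ℓ z⁻¹ := length_mul_of_minRep cs J hzi v⁻¹ hvinvP
  have hzv : v⁻¹ * z⁻¹ = (s j * z)⁻¹ := by rw [hv]; group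
  have hle : ℓ (v⁻¹ * z⁻¹) ≤ ℓ z + 1 := by
    rw [hzv, cs.length_inv]
    rcases cs.length_simple_mul z j with h | h <;> omega
  have hlv : ℓ v ≤ 1 := by
    rw [cs.length_inv v, cs.length_inv z] at hadd
    omega
  have hne : ℓ v ≠ 0 := by
    intro h0
    have : v = 1 := cs.length_eq_zero_iff.mp h0
    have hsj : s j = 1 := by
      have := congrArg (fun w => z * w * z⁻¹) this
      rw [hv] at this
      have h1 : z * (z⁻¹ * s j * z) * z⁻¹ = s j := by group
      rw [h1] at this
      simpa using this
    have := cs.length_simple j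
    rw [hsj, cs.length_one] at this
    omega
  exact simple_image_of_mem_parabolic cs J hvP (by omega)

lemma image_conj_eq {z : W} (hz : z ∈ minReps' cs J) (hzi : z⁻¹ ∈ minReps' cs J)
    (hzN : z ∈ Subgroup.normalizer (cs.parabolic J : Set W)) :
    (fun x => z⁻¹ * x * z) '' (cs.simple '' J) = cs.simple '' J := by
  apply Set.Subset.antisymm
  · rintro x ⟨y, ⟨j, hj, rfl⟩, rfl⟩
    exact conj_simple_mem cs J hz hzi hzN hj
  · rintro x ⟨j, hj, rfl⟩
    have hzN' : z⁻¹ ∈ Subgroup.normalizer (cs.parabolic J : Set W) := Subgroup.inv_mem _ hzN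
    have := conj_simple_mem cs J hzi (by rwa [inv_inv]) hzN' hj
    rw [inv_inv] at this
    obtain ⟨j', hj', hjeq⟩ := this
    refine ⟨s j', ⟨j', hj', rfl⟩, ?_⟩
    show z⁻¹ * s j' * z = s j
    rw [hjeq]; group

lemma normalizer_of_image {z : W}
    (himg : (fun x => z⁻¹ * x * z) '' (cs.simple '' J) = cs.simple '' J) :
    z ∈ Subgroup.normalizer (cs.parabolic J : Set W) := by
  have ha : ∀ h ∈ cs.parabolic J, z⁻¹ * h * z ∈ cs.parabolic J := by
    intro h hh
    induction hh using Subgroup.closure_induction with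
    | mem x hx =>
      apply Subgroup.subset_closure
      rw [← himg]
      exact ⟨x, hx, rfl⟩
    | one => simpa using Subgroup.one_mem _
    | mul x y _ _ hx hy =>
      have : z⁻¹ * (x * y) * z = (z⁻¹ * x * z) * (z⁻¹ * y * z) := by group
      rw [this]
      exact Subgroup.mul_mem _ hx hy
    | inv x _ hx =>
      have : z⁻¹ * x⁻¹ * z = (z⁻¹ * x * z)⁻¹ := by group
      rw [this]
      exact Subgroup.inv_mem _ hx
  have hb : ∀ h ∈ cs.parabolic J, z * h * z⁻¹ ∈ cs.parabolic J := by
    intro h hh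
    induction hh using Subgroup.closure_induction with
    | mem x hx =>
      have : x ∈ (fun x => z⁻¹ * x * z) '' (cs.simple '' J) := by rw [himg]; exact hx
      obtain ⟨y, hy, hyeq⟩ := this
      have : z * x * z⁻¹ = y := by rw [← hyeq]; group
      rw [this]
      exact Subgroup.subset_closure hy
    | one => simpa using Subgroup.one_mem _
    | mul x y _ _ hx hy =>
      have : z * (x * y) * z⁻¹ = (z * x * z⁻¹) * (z * y * z⁻¹) := by group
      rw [this]
      exact Subgroup.mul_mem _ hx hy
    | inv x _ hx =>
      have : z * x⁻¹ * z⁻¹ = (z * x * z⁻¹)⁻¹ := by group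
      rw [this]
      exact Subgroup.inv_mem _ hx
  rw [Subgroup.mem_normalizer_iff]
  intro h
  constructor
  · exact hb h
  · intro hh
    have := ha _ hh
    have he : z⁻¹ * (z * h * z⁻¹) * z = h := by group
    rwa [he] at this

lemma image_conj_inv {z : W}
    (himg : (fun x => z⁻¹ * x * z) '' (cs.simple '' J) = cs.simple '' J) :
    (fun x => z * x * z⁻¹) '' (cs.simple '' J) = cs.simple '' J := by
  apply Set.Subset.antisymm
  · rintro x ⟨y, hy, rfl⟩
    show z * y * z⁻¹ ∈ cs.simple '' J
    have : y ∈ (fun x => z⁻¹ * x * z) '' (cs.simple '' J) := by rw [himg]; exact hy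
    obtain ⟨y', hy', hyeq⟩ := this
    have hyy : z * y * z⁻¹ = y' := by
      have : y = z⁻¹ * y' * z := hyeq.symm
      rw [this]; group
    rw [hyy]
    exact hy'
  · intro x hx
    have hmem : z⁻¹ * x * z ∈ cs.simple '' J := by
      rw [← himg]; exact ⟨x, hx, rfl⟩
    exact ⟨z⁻¹ * x * z, hmem, by group⟩

lemma wordProd_map_conj (z : W) (σ : B → B) (ω : List B)
    (hσ : ∀ b ∈ ω, s (σ b) = z * s b * z⁻¹) :
    π (ω.map σ) = z * π ω * z⁻¹ := by
  induction ω with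
  | nil => simp
  | cons c ω ih =>
    rw [List.map_cons, cs.wordProd_cons, cs.wordProd_cons, hσ c (by simp),
      ih (fun b hb => hσ b (List.mem_cons_of_mem c hb))]
    group

lemma length_conj_le {z : W}
    (himg : (fun x => z⁻¹ * x * z) '' (cs.simple '' J) = cs.simple '' J)
    {w : W} (hw : cs.support w ⊆ J) : ℓ (z * w * z⁻¹) ≤ ℓ w := by
  classical
  have himg' := image_conj_inv cs J himg
  have hσex : ∀ b ∈ J, ∃ j ∈ J, s j = z * s b * z⁻¹ := by
    intro b hb
    have : z * s b * z⁻¹ ∈ cs.simple '' J := by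
      rw [← himg']; exact ⟨s b, ⟨b, hb, rfl⟩, rfl⟩
    obtain ⟨j, hj, hje⟩ := this
    exact ⟨j, hj, hje⟩
  obtain ⟨ω, hred, hprod⟩ := cs.exists_reduced_word' w
  set σ : B → B := fun b => if hb : b ∈ J then (hσex b hb).choose else b with hσdef
  have hσspec : ∀ b ∈ J, σ b ∈ J ∧ s (σ b) = z * s b * z⁻¹ := by
    intro b hb
    rw [hσdef]
    simp only [dif_pos hb]
    exact ⟨(hσex b hb).choose_spec.1, (hσex b hb).choose_spec.2⟩
  have hmemJ : ∀ b ∈ ω, b ∈ J := fun b hb => hw (letter_mem_support cs hred hprod.symm hb)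
  have heq : π (ω.map σ) = z * w * z⁻¹ := by
    rw [wordProd_map_conj cs z σ ω (fun b hb => (hσspec b (hmemJ b hb)).2), ← hprod]
  calc ℓ (z * w * z⁻¹) = ℓ (π (ω.map σ)) := by rw [heq]
    _ ≤ (ω.map σ).length := cs.length_wordProd_le _
    _ = ω.length := List.length_map σ
    _ = ℓ w := by rw [hprod]; exact hred.symm ▸ rfl

end P6

namespace P7
open P4 P5 P6
variable {B W : Type*} [Group W] [DecidableEq W] [DecidableEq B] {M : CoxeterMatrix B}
  (cs : CoxeterSystem M W) (J : Set B)

local prefix:100 "s" => cs.simple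
local prefix:100 "π" => cs.wordProd
local prefix:100 "ℓ" => cs.length

variable (hsat : ∀ c j, j ∈ J → cs.simple c = cs.simple j → c ∈ J)

include hsat

lemma length_conj_eq {z : W}
    (himg : (fun x => z⁻¹ * x * z) '' (cs.simple '' J) = cs.simple '' J)
    {w : W} (hw : cs.support w ⊆ J) : ℓ (z * w * z⁻¹) = ℓ w := by
  refine le_antisymm (length_conj_le cs J himg hw) ?_
  have hwP : w ∈ cs.parabolic J := mem_parabolic_of_support_subset cs J hw
  have hzN : z ∈ Subgroup.normalizer (cs.parabolic J : Set W) := normalizer_of_image cs J himg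
  have hw2P : z * w * z⁻¹ ∈ cs.parabolic J :=
    (Subgroup.mem_normalizer_iff.mp hzN w).mp hwP
  have hw2supp : cs.support (z * w * z⁻¹) ⊆ J :=
    support_subset_of_mem_parabolic cs J hsat hw2P
  have himg' := image_conj_inv cs J himg
  have himg'' : (fun x => (z⁻¹)⁻¹ * x * z⁻¹) '' (cs.simple '' J) = cs.simple '' J := by
    rw [inv_inv]; exact himg'
  have := length_conj_le cs J himg'' hw2supp
  have he : z⁻¹ * (z * w * z⁻¹) * (z⁻¹)⁻¹ = w := by group
  rwa [he] at this

lemma support_conj {z : W}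
    (hmin : z ∈ minReps' cs J) (hinvmin : z⁻¹ ∈ minReps' cs J)
    (himg : (fun x => z⁻¹ * x * z) '' (cs.simple '' J) = cs.simple '' J)
    {w : W} (hw : cs.support w = J) : cs.support (z * w * z⁻¹) = J := by
  classical
  have hzN : z ∈ Subgroup.normalizer (cs.parabolic J : Set W) := normalizer_of_image cs J himg
  have hwsub : cs.support w ⊆ J := by rw [hw]
  have hwP : w ∈ cs.parabolic J := mem_parabolic_of_support_subset cs J hwsub
  have hw2P : z * w * z⁻¹ ∈ cs.parabolic J :=
    (Subgroup.mem_normalizer_iff.mp hzN w).mp hwP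
  apply Set.Subset.antisymm
  · exact support_subset_of_mem_parabolic cs J hsat hw2P
  · intro j hj
    -- find c ∈ J with z⁻¹ * s j * z = s c
    have hc : z⁻¹ * s j * z ∈ cs.simple '' J := by
      rw [← himg]
      exact ⟨s j, ⟨j, hj, rfl⟩, rfl⟩
    obtain ⟨c, hcJ, hceq⟩ := hc
    -- choice function σ
    have himg' := image_conj_inv cs J himg
    have hσex : ∀ b ∈ J, ∃ j' ∈ J, s j' = z * s b * z⁻¹ := by
      intro b hb
      have : z * s b * z⁻¹ ∈ cs.simple '' J := by
        rw [← himg']; exact ⟨s b, ⟨b, hb, rfl⟩, rfl⟩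
      obtain ⟨j', hj', hje⟩ := this
      exact ⟨j', hj', hje⟩
    set σ : B → B := fun b => if hb : b ∈ J then (hσex b hb).choose else b with hσdef
    have hσspec : ∀ b ∈ J, σ b ∈ J ∧ s (σ b) = z * s b * z⁻¹ := by
      intro b hb
      rw [hσdef]
      simp only [dif_pos hb]
      exact ⟨(hσex b hb).choose_spec.1, (hσex b hb).choose_spec.2⟩
    -- c is in the support of w
    have hcsupp : c ∈ cs.support w := by rw [hw]; exact hcJ
    obtain ⟨ω, hred, hprod, hcω⟩ := hcsupp
    have hmemJ : ∀ b ∈ ω, b ∈ J := fun b hb => hwsub (letter_mem_support cs hred hprod hb)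
    have heq : π (ω.map σ) = z * w * z⁻¹ := by
      rw [wordProd_map_conj cs z σ ω (fun b hb => (hσspec b (hmemJ b hb)).2), hprod]
    have hredσ : cs.IsReduced (ω.map σ) := by
      rw [CoxeterSystem.IsReduced, heq, List.length_map]
      rw [length_conj_eq cs J hsat himg hwsub, ← hprod]
      exact hred
    have hσc : σ c ∈ cs.support (z * w * z⁻¹) :=
      ⟨ω.map σ, hredσ, heq, List.mem_map.mpr ⟨c, hcω, rfl⟩⟩
    -- s (σ c) = s j
    have hjeq : s j = s (σ c) := by
      rw [(hσspec c hcJ).2, hceq]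
      group
    exact mem_support_of_simple_eq cs hjeq hσc

end P7


/-- Let `J` be an irreducible subset of `S` and `t` a reflection of `W_J` with full support `J`.
Then `{x ∈ N_W(W_J) | J(x t x⁻¹) = J} = X(S,J) · W_J(t)`, where
`W_J(t) = {x ∈ W_J | J(x t x⁻¹) = J}`. -/
theorem statement9 (cs : CoxeterSystem M W) [Finite W] (J : Set B)
    (hJ : M.IsIrreducibleOn J) (t : W) (ht : cs.IsReflection t)
    (htJ : t ∈ cs.parabolic J) (hsupp : cs.support t = J) :
    {x : W | x ∈ Subgroup.normalizer (cs.parabolic J : Set W) ∧ cs.support (x * t * x⁻¹) = J}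
      = cs.XSJ J * {x : W | x ∈ cs.parabolic J ∧ cs.support (x * t * x⁻¹) = J} := by
  classical
  have hsat : ∀ c j, j ∈ J → cs.simple c = cs.simple j → c ∈ J := by
    intro c j hj hcj
    have hjsupp : j ∈ cs.support t := by rw [hsupp]; exact hj
    have := P5.mem_support_of_simple_eq cs hcj hjsupp
    rwa [hsupp] at this
  ext x
  simp only [Set.mem_setOf_eq]
  constructor
  · rintro ⟨hxN, hxsupp⟩
    obtain ⟨u, huP, z, hzmin', rfl⟩ := P5.exists_decomp cs J x
    have hzmin : z ∈ P5.minReps' cs J := hzmin'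
    have hzN : z ∈ Subgroup.normalizer (cs.parabolic J : Set W) := by
      have huN : u ∈ Subgroup.normalizer (cs.parabolic J : Set W) := Subgroup.le_normalizer huP
      have h2 := Subgroup.mul_mem _ (Subgroup.inv_mem _ huN) hxN
      rwa [← mul_assoc, inv_mul_cancel, one_mul] at h2
    have hinvmin := P6.inv_mem_minReps cs J hzmin hzN
    have himg := P6.image_conj_eq cs J hzmin hinvmin hzN
    set v := z⁻¹ * u * z with hv
    have hvP : v ∈ cs.parabolic J := by
      have h3 := (Subgroup.mem_normalizer_iff.mp (Subgroup.inv_mem _ hzN) u).mp huP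
      rwa [inv_inv] at h3
    have hxz : u * z = z * v := by rw [hv]; group
    have hconj : v * t * v⁻¹ = z⁻¹ * ((u*z) * t * (u*z)⁻¹) * z := by
      rw [hv]; group
    have hsupp2 : cs.support (v * t * v⁻¹) = J := by
      rw [hconj]
      have himg2 : (fun y => (z⁻¹)⁻¹ * y * z⁻¹) '' (cs.simple '' J) = cs.simple '' J := by
        rw [inv_inv]; exact P6.image_conj_inv cs J himg
      have h4 := P7.support_conj cs J hsat hinvmin (by rwa [inv_inv]) himg2 hxsupp
      rwa [inv_inv] at h4
    exact Set.mem_mul.mpr ⟨z, ⟨hzmin, hinvmin, himg⟩, v, ⟨hvP, hsupp2⟩, hxz.symm⟩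
  · intro hx
    obtain ⟨z, ⟨hzmin, hinvmin, himg⟩, v, ⟨hvP, hvsupp⟩, rfl⟩ := Set.mem_mul.mp hx
    have hzN := P6.normalizer_of_image cs J himg
    constructor
    · exact Subgroup.mul_mem _ hzN (Subgroup.le_normalizer hvP)
    · have hconj : (z*v) * t * (z*v)⁻¹ = z * (v * t * v⁻¹) * z⁻¹ := by group
      rw [hconj]
      exact P7.support_conj cs J hsat hzmin hinvmin himg hvsupp
end
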